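/- arXiv:1312.1094 — 3 statements merged into one kernel-verified Lean document; each statement's English description precedes it below -/
import Mathlib

section
/- For every integer b ≥ 2 and every bijection φ : ℕ → ℕ, the digit-permutation map T^b_φ is a bijection of [0,1) onto itself and preserves Lebesgue measure: the pushforward of λ restricted to [0,1) under T^b_φ equals λ restricted to [0,1). -/
open MeasureTheory

/-- The real number in `[0,1]` represented by a base-`b` digit sequence `a`,
namely `∑_{k ≥ 0} a(k) · b^{-(k+1)}`. -/
noncomputable def baseVal (b : ℕ) (a : ℕ → ℕ) : ℝ :=
  ∑' k : ℕ, (a k : ℝ) / (b : ℝ) ^ (k + 1)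

/-- The `k`-th digit of the canonical base-`b` expansion of `x ∈ [0,1)`, i.e. of the unique
representing base-`b` digit sequence that is not eventually `b - 1`; it is given by the
standard formula `⌊x · b^(k+1)⌋ mod b`. -/
noncomputable def canonDigit (b : ℕ) (x : ℝ) (k : ℕ) : ℕ :=
  (⌊x * (b : ℝ) ^ (k + 1)⌋ % (b : ℤ)).toNat

/-- The digit-permutation map `T^b_φ : [0,1) → [0,1)` associated to a bijection `φ : ℕ → ℕ`:
it sends `x` with canonical base-`b` expansion `a` to the real number represented by the
digit sequence `k ↦ a(φ⁻¹(k))`. -/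
noncomputable def digitPerm (b : ℕ) (φ : ℕ ≃ ℕ) (x : ℝ) : ℝ :=
  baseVal b (fun k => canonDigit b x (φ.symm k))

namespace DigitPermProof

variable {b : ℕ}

lemma Bpos (hb : 2 ≤ b) : (0:ℝ) < (b:ℝ) := by
  have : (0:ℕ) < b := by omega
  exact_mod_cast this

lemma B1 (hb : 2 ≤ b) : (1:ℝ) < (b:ℝ) := by
  have : (1:ℕ) < b := by omega
  exact_mod_cast this

lemma digit_lt (hb : 2 ≤ b) (x : ℝ) (k : ℕ) : canonDigit b x k < b := by
  unfold canonDigit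
  have hbz : (0:ℤ) < (b:ℤ) := by exact_mod_cast (by omega : 0 < b)
  have := Int.emod_lt_of_pos (⌊x * (b:ℝ)^(k+1)⌋) hbz
  omega

lemma digit_cast (hb : 2 ≤ b) (x : ℝ) (k : ℕ) :
    ((canonDigit b x k : ℤ)) = ⌊x * (b:ℝ)^(k+1)⌋ % (b:ℤ) := by
  unfold canonDigit
  exact Int.toNat_of_nonneg (Int.emod_nonneg _ (by exact_mod_cast (by omega : b ≠ 0)))

lemma summable_digits (hb : 2 ≤ b) {a : ℕ → ℕ} (ha : ∀ k, a k < b) :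
    Summable (fun k => (a k : ℝ) / (b:ℝ)^(k+1)) := by
  have hB := Bpos hb
  refine Summable.of_nonneg_of_le (fun k => by positivity) (fun k => ?_)
    (summable_geometric_of_lt_one (r := ((b:ℝ))⁻¹) (by positivity) (inv_lt_one_of_one_lt₀ (B1 hb)))
  have h1 : (a k : ℝ) ≤ (b:ℝ) := by exact_mod_cast (ha k).le
  have h2 : (a k : ℝ) / (b:ℝ)^(k+1) ≤ (b:ℝ) / (b:ℝ)^(k+1) := by gcongr
  refine h2.trans (le_of_eq ?_)
  rw [inv_pow, pow_succ]
  field_simp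

noncomputable def tailSum (b : ℕ) (a : ℕ → ℕ) (n : ℕ) : ℝ :=
  ∑' k : ℕ, (a (n + k) : ℝ) / (b : ℝ) ^ (n + k + 1)

lemma summable_tail (hb : 2 ≤ b) {a : ℕ → ℕ} (ha : ∀ k, a k < b) (n : ℕ) :
    Summable (fun k => (a (n + k) : ℝ) / (b:ℝ)^(n + k + 1)) := by
  have h := (summable_nat_add_iff (f := fun k => (a k : ℝ) / (b:ℝ)^(k+1)) n).2
    (summable_digits hb ha)
  refine h.congr fun k => ?_
  simp [Nat.add_comm]

lemma tail_nonneg (hb : 2 ≤ b) (a : ℕ → ℕ) (n : ℕ) : 0 ≤ tailSum b a n := by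
  have hB := Bpos hb
  exact tsum_nonneg fun k => by positivity

lemma tail_succ (hb : 2 ≤ b) {a : ℕ → ℕ} (ha : ∀ k, a k < b) (n : ℕ) :
    tailSum b a n = (a n : ℝ) / (b:ℝ)^(n+1) + tailSum b a (n+1) := by
  unfold tailSum
  have hc : ∀ k : ℕ, (a (n + (k+1)) : ℝ) / (b:ℝ)^(n + (k+1) + 1)
      = (a ((n+1) + k) : ℝ) / (b:ℝ)^((n+1) + k + 1) := fun k => by
    rw [show n + (k+1) = (n+1) + k by omega]
  rw [Summable.tsum_eq_zero_add (summable_tail hb ha n), tsum_congr hc]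
  simp [tailSum]

lemma tsum_geom (hb : 2 ≤ b) (n : ℕ) :
    ∑' k : ℕ, ((b:ℝ) - 1) / (b:ℝ)^(n + k + 1) = ((b:ℝ)^n)⁻¹ := by
  have hB := Bpos hb
  have hB1 := B1 hb
  have h1 : ∀ k : ℕ, ((b:ℝ) - 1) / (b:ℝ)^(n + k + 1)
      = (((b:ℝ) - 1) / (b:ℝ)^(n+1)) * ((b:ℝ)⁻¹)^k := by
    intro k
    rw [show n + k + 1 = (n+1) + k by omega, pow_add, inv_pow]
    field_simp
  rw [tsum_congr h1, tsum_mul_left,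
    tsum_geometric_of_lt_one (by positivity) (inv_lt_one_of_one_lt₀ hB1)]
  have hne : (b:ℝ) - 1 ≠ 0 := by linarith
  have hne2 : (1 : ℝ) - (b:ℝ)⁻¹ ≠ 0 := by
    have : (b:ℝ)⁻¹ < 1 := inv_lt_one_of_one_lt₀ hB1
    linarith
  field_simp
  ring

lemma tail_le (hb : 2 ≤ b) {a : ℕ → ℕ} (ha : ∀ k, a k < b) (n : ℕ) :
    tailSum b a n ≤ ((b:ℝ)^n)⁻¹ := by
  have hB := Bpos hb
  rw [← tsum_geom hb n]
  refine Summable.tsum_le_tsum (fun k => ?_) (summable_tail hb ha n) ?_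
  · have : (a (n+k) : ℝ) ≤ (b:ℝ) - 1 := by
      have := ha (n+k); have : (a (n+k) : ℝ) + 1 ≤ (b:ℝ) := by exact_mod_cast this
      linarith
    gcongr
  · have h1 : ∀ k : ℕ, ((b:ℝ) - 1) / (b:ℝ)^(n + k + 1)
        = (((b:ℝ) - 1) / (b:ℝ)^(n+1)) * ((b:ℝ)⁻¹)^k := by
      intro k
      rw [show n + k + 1 = (n+1) + k by omega, pow_add, inv_pow]
      field_simp
    refine Summable.congr ?_ (fun k => (h1 k).symm)
    exact (summable_geometric_of_lt_one (by positivity)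
      (inv_lt_one_of_one_lt₀ (B1 hb))).mul_left _

lemma tail_lt_aux (hb : 2 ≤ b) {a : ℕ → ℕ} (ha : ∀ k, a k < b) :
    ∀ d n, a (n + d) + 1 < b → tailSum b a n < ((b:ℝ)^n)⁻¹ := by
  have hB := Bpos hb
  intro d
  induction d with
  | zero =>
    intro n hn
    rw [tail_succ hb ha n]
    have h1 : tailSum b a (n+1) ≤ ((b:ℝ)^(n+1))⁻¹ := tail_le hb ha (n+1)
    have h2 : (a n : ℝ) + 1 < (b:ℝ) := by
      have : a n + 1 < b := by simpa using hn
      exact_mod_cast this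
    have hp : (0:ℝ) < (b:ℝ)^(n+1) := by positivity
    have h3 : (a n : ℝ) / (b:ℝ)^(n+1) + ((b:ℝ)^(n+1))⁻¹ < ((b:ℝ)^n)⁻¹ := by
      have key : (a n : ℝ)/(b:ℝ)^(n+1) + ((b:ℝ)^(n+1))⁻¹ = ((a n : ℝ)+1)/(b:ℝ)^(n+1) := by
        field_simp
      rw [key, div_lt_iff₀ hp, pow_succ, ← mul_assoc,
        inv_mul_cancel₀ (ne_of_gt (pow_pos hB n)), one_mul]
      exact h2
    linarith
  | succ d ih =>
    intro n hn
    have hih : tailSum b a (n+1) < ((b:ℝ)^(n+1))⁻¹ := by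
      apply ih (n+1)
      rw [show n + 1 + d = n + (d+1) by omega]; exact hn
    rw [tail_succ hb ha n]
    have h2 : (a n : ℝ) + 1 ≤ (b:ℝ) := by exact_mod_cast ha n
    have hp : (0:ℝ) < (b:ℝ)^(n+1) := by positivity
    have h3 : (a n : ℝ) / (b:ℝ)^(n+1) + ((b:ℝ)^(n+1))⁻¹ ≤ ((b:ℝ)^n)⁻¹ := by
      have key : (a n : ℝ)/(b:ℝ)^(n+1) + ((b:ℝ)^(n+1))⁻¹ = ((a n : ℝ)+1)/(b:ℝ)^(n+1) := by
        field_simp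
      rw [key, div_le_iff₀ hp, pow_succ, ← mul_assoc,
        inv_mul_cancel₀ (ne_of_gt (pow_pos hB n)), one_mul]
      exact h2
    linarith

lemma tail_lt (hb : 2 ≤ b) {a : ℕ → ℕ} (ha : ∀ k, a k < b)
    (hne : ∀ n, ∃ m, n ≤ m ∧ a m + 1 < b) (n : ℕ) :
    tailSum b a n < ((b:ℝ)^n)⁻¹ := by
  obtain ⟨m, hm, hlt⟩ := hne n
  have := tail_lt_aux hb ha (m - n) n (by rw [show n + (m-n) = m by omega]; exact hlt)
  exact this

lemma baseVal_eq_partial_add_tail (hb : 2 ≤ b) {a : ℕ → ℕ} (ha : ∀ k, a k < b) (n : ℕ) :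
    baseVal b a = (∑ k ∈ Finset.range n, (a k : ℝ) / (b:ℝ)^(k+1)) + tailSum b a n := by
  unfold baseVal tailSum
  rw [← Summable.sum_add_tsum_nat_add n (summable_digits hb ha)]
  congr 1
  exact tsum_congr fun k => by rw [Nat.add_comm k n]

def zc (b : ℕ) (c : ℕ → ℕ) : ℕ → ℤ
  | 0 => 0
  | (n+1) => b * zc b c n + c n

lemma zc_cast (hb : 2 ≤ b) (c : ℕ → ℕ) (n : ℕ) :
    ((zc b c n : ℤ) : ℝ) = (b:ℝ)^n * ∑ k ∈ Finset.range n, (c k : ℝ) / (b:ℝ)^(k+1) := by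
  have hB := Bpos hb
  induction n with
  | zero => simp [zc]
  | succ n ih =>
    rw [Finset.sum_range_succ, zc]
    push_cast
    rw [ih]
    have hpow : ((b:ℝ))^(n+1) ≠ 0 := by positivity
    field_simp
    ring

lemma zc_nonneg (c : ℕ → ℕ) (n : ℕ) : 0 ≤ zc b c n := by
  induction n with
  | zero => simp [zc]
  | succ n ih => rw [zc]; positivity

lemma zc_lt (hb : 2 ≤ b) {c : ℕ → ℕ} {n : ℕ} (hc : ∀ k < n, c k < b) :
    zc b c n < (b:ℤ)^n := by
  induction n with
  | zero => simp [zc]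
  | succ n ih =>
    have h1 : zc b c n < (b:ℤ)^n := ih (fun k hk => hc k (by omega))
    have h2 : (c n : ℤ) < (b:ℤ) := by exact_mod_cast hc n (by omega)
    have hbz : (0:ℤ) < (b:ℤ) := by exact_mod_cast (by omega : 0 < b)
    rw [zc, pow_succ]
    have : (b:ℤ) * zc b c n ≤ (b:ℤ) * ((b:ℤ)^n - 1) := by
      apply mul_le_mul_of_nonneg_left (by omega) (by omega)
    nlinarith
 
lemma zc_congr {c c' : ℕ → ℕ} {n : ℕ} (h : ∀ k < n, c k = c' k) :
    zc b c n = zc b c' n := by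
  induction n with
  | zero => simp [zc]
  | succ n ih =>
    rw [zc, zc, ih (fun k hk => h k (by omega)), h n (by omega)]

lemma zc_surj (hb : 2 ≤ b) (n : ℕ) :
    ∀ m : ℤ, 0 ≤ m → m < (b:ℤ)^n → ∃ c : ℕ → ℕ, (∀ k, c k < b) ∧ zc b c n = m := by
  induction n with
  | zero =>
    intro m h0 h1
    rw [pow_zero] at h1
    exact ⟨fun _ => 0, fun _ => by show (0:ℕ) < b; omega, by simp [zc]; omega⟩
  | succ n ih =>
    intro m h0 h1
    have hbz : (0:ℤ) < (b:ℤ) := by exact_mod_cast (by omega : 0 < b)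
    set q := m / (b:ℤ) with hq
    set r := m % (b:ℤ) with hr
    have hr0 : 0 ≤ r := Int.emod_nonneg m (by omega)
    have hrb : r < (b:ℤ) := Int.emod_lt_of_pos m hbz
    have hq0 : 0 ≤ q := Int.ediv_nonneg h0 (by omega)
    have hqlt : q < (b:ℤ)^n := by
      rw [hq, Int.ediv_lt_iff_lt_mul hbz]
      calc m < (b:ℤ)^(n+1) := h1
        _ = (b:ℤ)^n * b := by rw [pow_succ]
    obtain ⟨c', hc', hzc'⟩ := ih q hq0 hqlt
    refine ⟨fun k => if k < n then c' k else r.toNat, fun k => ?_, ?_⟩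
    · by_cases h : k < n <;> simp [h]
      · exact hc' k
      · omega
    · rw [zc]
      have e1 : zc b (fun k => if k < n then c' k else r.toNat) n = zc b c' n :=
        zc_congr (fun k hk => by simp [hk])
      rw [e1, hzc']
      have htn : ((r.toNat : ℕ) : ℤ) = r := Int.toNat_of_nonneg hr0
      simp only [lt_irrefl n, if_false, htn]
      have h2 := Int.mul_ediv_add_emod m (b:ℤ)
      rw [← hq, ← hr] at h2
      linarith

lemma floor_step (hb : 2 ≤ b) (x : ℝ) (n : ℕ) :
    ⌊x * (b:ℝ)^(n+1)⌋ = b * ⌊x * (b:ℝ)^n⌋ + ⌊x * (b:ℝ)^(n+1)⌋ % (b:ℤ) := by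
  have hB := Bpos hb
  set q := ⌊x * (b:ℝ)^n⌋ with hqdef
  set a := ⌊x * (b:ℝ)^(n+1)⌋ with hadef
  have h0 : (b:ℤ) * q ≤ a := by
    rw [hadef]
    apply Int.le_floor.2
    push_cast
    have : (q:ℝ) ≤ x * (b:ℝ)^n := Int.floor_le _
    calc (b:ℝ) * q ≤ (b:ℝ) * (x * (b:ℝ)^n) := by
          apply mul_le_mul_of_nonneg_left this (le_of_lt hB)
      _ = x * (b:ℝ)^(n+1) := by ring
  have h1 : a < (b:ℤ) * q + b := by
    rw [hadef]
    apply Int.floor_lt.2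
    push_cast
    have : x * (b:ℝ)^n < (q:ℝ) + 1 := Int.lt_floor_add_one _
    calc x * (b:ℝ)^(n+1) = (b:ℝ) * (x * (b:ℝ)^n) := by ring
      _ < (b:ℝ) * ((q:ℝ) + 1) := by
          apply mul_lt_mul_of_pos_left this hB
      _ = (b:ℝ) * q + b := by ring
  have hmod : a % (b:ℤ) = a - (b:ℤ) * q := by
    have e : a = (a - (b:ℤ)*q) + (b:ℤ) * q := by ring
    have h2 : (a - (b:ℤ)*q) % (b:ℤ) = a - (b:ℤ)*q :=
      Int.emod_eq_of_lt (by linarith) (by linarith)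
    rw [e, Int.add_mul_emod_self_left, h2]
    ring
  rw [hmod]; ring

lemma floor_baseVal (hb : 2 ≤ b) {a : ℕ → ℕ} (ha : ∀ k, a k < b)
    (hne : ∀ n, ∃ m, n ≤ m ∧ a m + 1 < b) (n : ℕ) :
    ⌊baseVal b a * (b:ℝ)^n⌋ = zc b a n := by
  have hB := Bpos hb
  have hpow : (0:ℝ) < (b:ℝ)^n := by positivity
  rw [Int.floor_eq_iff]
  have hdecomp := baseVal_eq_partial_add_tail hb ha n
  have hzc := zc_cast hb a n
  have htail0 := tail_nonneg hb a n
  have htail1 := tail_lt hb ha hne n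
  constructor
  · rw [hzc, hdecomp]
    have h2 : 0 ≤ tailSum b a n * (b:ℝ)^n := by positivity
    nlinarith
  · rw [hdecomp]
    push_cast
    rw [hzc]
    have h2 : tailSum b a n * (b:ℝ)^n < 1 := by
      have h3 := mul_lt_mul_of_pos_right htail1 hpow
      rwa [inv_mul_cancel₀ (ne_of_gt hpow)] at h3
    nlinarith

lemma canonDigit_baseVal (hb : 2 ≤ b) {a : ℕ → ℕ} (ha : ∀ k, a k < b)
    (hne : ∀ n, ∃ m, n ≤ m ∧ a m + 1 < b) (k : ℕ) :
    canonDigit b (baseVal b a) k = a k := by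
  have h1 := floor_baseVal hb ha hne (k+1)
  have h2 : zc b a (k+1) = (b:ℤ) * zc b a k + (a k : ℤ) := rfl
  have h3 : ((a k : ℤ)) % (b:ℤ) = (a k : ℤ) :=
    Int.emod_eq_of_lt (by positivity) (by exact_mod_cast ha k)
  unfold canonDigit
  rw [h1, h2, add_comm, Int.add_mul_emod_self_left, h3]
  simp

lemma baseVal_mem (hb : 2 ≤ b) {a : ℕ → ℕ} (ha : ∀ k, a k < b)
    (hne : ∀ n, ∃ m, n ≤ m ∧ a m + 1 < b) :
    baseVal b a ∈ Set.Ico (0:ℝ) 1 := by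
  have hdecomp := baseVal_eq_partial_add_tail hb ha 0
  simp only [Finset.range_zero, Finset.sum_empty, zero_add] at hdecomp
  have h0 := tail_nonneg hb a 0
  have h1 := tail_lt hb ha hne 0
  rw [pow_zero, inv_one] at h1
  exact ⟨by linarith, by linarith⟩

lemma partial_eq_floor (hb : 2 ≤ b) {x : ℝ} (hx : x ∈ Set.Ico (0:ℝ) 1) (n : ℕ) :
    ∑ k ∈ Finset.range n, (canonDigit b x k : ℝ) / (b:ℝ)^(k+1)
      = (⌊x * (b:ℝ)^n⌋ : ℝ) / (b:ℝ)^n := by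
  have hB := Bpos hb
  induction n with
  | zero =>
    simp only [Finset.range_zero, Finset.sum_empty, pow_zero, mul_one, div_one]
    rw [Int.floor_eq_zero_iff.2 (by exact ⟨hx.1, hx.2⟩)]
    simp
  | succ n ih =>
    rw [Finset.sum_range_succ, ih]
    have hstep := floor_step hb x n
    have hcast := digit_cast hb x n
    have hkey : ((⌊x * (b:ℝ)^(n+1)⌋ : ℤ) : ℝ)
        = (b:ℝ) * ((⌊x * (b:ℝ)^n⌋ : ℤ) : ℝ) + (canonDigit b x n : ℝ) := by
      rw [hstep]
      push_cast
      rw [← hcast]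
      push_cast
      ring
    rw [hkey]
    have hp1 : ((b:ℝ))^n ≠ 0 := by positivity
    have hp2 : ((b:ℝ))^(n+1) ≠ 0 := by positivity
    field_simp
    ring

lemma baseVal_canonDigit (hb : 2 ≤ b) {x : ℝ} (hx : x ∈ Set.Ico (0:ℝ) 1) :
    baseVal b (canonDigit b x) = x := by
  have hB := Bpos hb
  have hd : ∀ k, canonDigit b x k < b := digit_lt hb x
  have hsum := summable_digits hb hd
  have h1 : Filter.Tendsto
      (fun n => ∑ k ∈ Finset.range n, (canonDigit b x k : ℝ) / (b:ℝ)^(k+1))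
      Filter.atTop (nhds (baseVal b (canonDigit b x))) :=
    hsum.hasSum.tendsto_sum_nat
  have h2 : Filter.Tendsto
      (fun n => ∑ k ∈ Finset.range n, (canonDigit b x k : ℝ) / (b:ℝ)^(k+1))
      Filter.atTop (nhds x) := by
    apply tendsto_of_tendsto_of_tendsto_of_le_of_le
      (g := fun n => x - ((b:ℝ)⁻¹)^n) (h := fun _ => x)
    · have hpow0 : Filter.Tendsto (fun n : ℕ => ((b:ℝ)⁻¹)^n) Filter.atTop (nhds 0) :=
        tendsto_pow_atTop_nhds_zero_of_lt_one (by positivity) (inv_lt_one_of_one_lt₀ (B1 hb))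
      have := hpow0.const_sub x
      simpa using this
    · exact tendsto_const_nhds
    · intro n
      simp only
      rw [partial_eq_floor hb hx n]
      have hpow : (0:ℝ) < (b:ℝ)^n := by positivity
      rw [le_div_iff₀ hpow]
      have h := Int.sub_one_lt_floor (x * (b:ℝ)^n)
      have e : ((b:ℝ)⁻¹)^n * (b:ℝ)^n = 1 := by
        rw [inv_pow]; exact inv_mul_cancel₀ (by positivity)
      nlinarith
    · intro n
      simp only
      rw [partial_eq_floor hb hx n]
      have hpow : (0:ℝ) < (b:ℝ)^n := by positivity
      rw [div_le_iff₀ hpow]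
      exact Int.floor_le _
  exact tendsto_nhds_unique h1 h2

lemma canonDigit_ne (hb : 2 ≤ b) {x : ℝ} (hx : x ∈ Set.Ico (0:ℝ) 1) (n : ℕ) :
    ∃ m, n ≤ m ∧ canonDigit b x m + 1 < b := by
  have hB := Bpos hb
  by_contra h
  push_neg at h
  have hd : ∀ k, canonDigit b x k < b := digit_lt hb x
  have heq : ∀ m, n ≤ m → canonDigit b x m = b - 1 := fun m hm => by
    have h1 := h m hm; have h2 := hd m; omega
  have hdecomp := baseVal_eq_partial_add_tail hb hd n
  rw [baseVal_canonDigit hb hx] at hdecomp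
  have htail : tailSum b (canonDigit b x) n = ((b:ℝ)^n)⁻¹ := by
    unfold tailSum
    rw [← tsum_geom hb n]
    refine tsum_congr fun k => ?_
    rw [heq (n+k) (by omega)]
    congr 1
    rw [Nat.cast_sub (by omega : 1 ≤ b), Nat.cast_one]
  have hpart := partial_eq_floor hb hx n
  rw [hpart, htail] at hdecomp
  have hfl := Int.lt_floor_add_one (x * (b:ℝ)^n)
  have hpow : (0:ℝ) < (b:ℝ)^n := by positivity
  set F : ℝ := ((⌊x * (b:ℝ)^n⌋ : ℤ) : ℝ) with hF
  have h2 : x * (b:ℝ)^n = F + 1 := by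
    rw [hdecomp]
    field_simp
  linarith

lemma digits_eq_iff_floor (hb : 2 ≤ b) {c : ℕ → ℕ} {n : ℕ} (hc : ∀ k < n, c k < b)
    {x : ℝ} (hx : x ∈ Set.Ico (0:ℝ) 1) :
    (∀ k < n, canonDigit b x k = c k) ↔ ⌊x * (b:ℝ)^n⌋ = zc b c n := by
  have hB := Bpos hb
  induction n with
  | zero =>
    simp only [Nat.not_lt_zero, IsEmpty.forall_iff, forall_const, true_iff]
    rw [pow_zero, mul_one, zc]
    exact Int.floor_eq_zero_iff.2 ⟨hx.1, hx.2⟩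
  | succ n ih =>
    have hc' : ∀ k < n, c k < b := fun k hk => hc k (by omega)
    have ihh := ih hc'
    have hstep := floor_step hb x n
    have hcast := digit_cast hb x n
    have hbz : (0:ℤ) < (b:ℤ) := by exact_mod_cast (by omega : 0 < b)
    constructor
    · intro h
      have h1 : ⌊x * (b:ℝ)^n⌋ = zc b c n := ihh.1 (fun k hk => h k (by omega))
      have h2 : canonDigit b x n = c n := h n (by omega)
      rw [zc, ← h1, hstep]
      congr 1
      rw [← hcast, h2]
    · intro h
      rw [zc] at h
      have hr0 : 0 ≤ ⌊x * (b:ℝ)^(n+1)⌋ % (b:ℤ) := Int.emod_nonneg _ (by omega)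
      have hr1 : ⌊x * (b:ℝ)^(n+1)⌋ % (b:ℤ) < (b:ℤ) := Int.emod_lt_of_pos _ hbz
      have hcn0 : (0:ℤ) ≤ (c n : ℤ) := by positivity
      have hcn1 : (c n : ℤ) < (b:ℤ) := by exact_mod_cast hc n (by omega)
      -- b * ⌊x B^n⌋ + r = b * zc + c n  with 0 ≤ r, c n < b
      have hkey : (b:ℤ) * ⌊x * (b:ℝ)^n⌋ + ⌊x * (b:ℝ)^(n+1)⌋ % (b:ℤ)
          = (b:ℤ) * zc b c n + (c n : ℤ) := by rw [← hstep, h]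
      have hdvd : (b:ℤ) ∣ ((c n : ℤ) - ⌊x * (b:ℝ)^(n+1)⌋ % (b:ℤ)) :=
        ⟨⌊x * (b:ℝ)^n⌋ - zc b c n, by linarith [hkey]⟩
      have hzero : (c n : ℤ) - ⌊x * (b:ℝ)^(n+1)⌋ % (b:ℤ) = 0 := by
        refine Int.eq_zero_of_abs_lt_dvd hdvd ?_
        rw [abs_lt]; omega
      have hfl : ⌊x * (b:ℝ)^n⌋ = zc b c n := by
        have := hkey
        have hbne : (b:ℤ) ≠ 0 := by omega
        apply mul_left_cancel₀ hbne
        linarith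
      intro k hk
      rcases Nat.lt_succ_iff_lt_or_eq.1 hk with hk' | hk'
      · exact ihh.2 hfl k hk'
      · subst hk'
        have : (canonDigit b x k : ℤ) = (c k : ℤ) := by rw [hcast]; omega
        exact_mod_cast this

lemma cyl_eq (hb : 2 ≤ b) {c : ℕ → ℕ} {n : ℕ} (hc : ∀ k < n, c k < b) :
    {x ∈ Set.Ico (0:ℝ) 1 | ∀ k < n, canonDigit b x k = c k}
      = Set.Ico (((zc b c n : ℤ) : ℝ) / (b:ℝ)^n) ((((zc b c n : ℤ) : ℝ) + 1) / (b:ℝ)^n) := by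
  have hB := Bpos hb
  have hpow : (0:ℝ) < (b:ℝ)^n := by positivity
  have hz0 : (0:ℤ) ≤ zc b c n := zc_nonneg c n
  have hz1 : zc b c n < (b:ℤ)^n := zc_lt hb hc
  have hz1R : ((zc b c n : ℤ) : ℝ) + 1 ≤ (b:ℝ)^n := by
    have : zc b c n + 1 ≤ (b:ℤ)^n := hz1
    exact_mod_cast this
  have hz0R : (0:ℝ) ≤ ((zc b c n : ℤ) : ℝ) := by exact_mod_cast hz0
  ext x
  simp only [Set.mem_setOf_eq, Set.mem_Ico]
  constructor
  · rintro ⟨hx, h⟩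
    have hfl := (digits_eq_iff_floor hb hc hx).1 h
    have h1 : ((zc b c n : ℤ) : ℝ) ≤ x * (b:ℝ)^n := by rw [← hfl]; exact Int.floor_le _
    have h2 : x * (b:ℝ)^n < ((zc b c n : ℤ) : ℝ) + 1 := by
      rw [← hfl]; exact Int.lt_floor_add_one _
    exact ⟨by rw [div_le_iff₀ hpow]; linarith, by rw [lt_div_iff₀ hpow]; linarith⟩
  · rintro ⟨h1, h2⟩
    rw [div_le_iff₀ hpow] at h1
    rw [lt_div_iff₀ hpow] at h2
    have hx : x ∈ Set.Ico (0:ℝ) 1 := by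
      constructor
      · nlinarith
      · nlinarith
    refine ⟨hx, (digits_eq_iff_floor hb hc hx).2 ?_⟩
    rw [Int.floor_eq_iff]
    exact ⟨h1, h2⟩

lemma measurable_canonDigitPerm (hb : 2 ≤ b) (ψ : ℕ → ℕ) :
    Measurable (fun x : ℝ => baseVal b (fun k => canonDigit b x (ψ k))) := by
  have hB := Bpos hb
  have hmd : ∀ j : ℕ, Measurable (fun x : ℝ => (canonDigit b x j : ℝ)) := by
    intro j
    have h1 : Measurable (fun x : ℝ => ⌊x * (b:ℝ)^(j+1)⌋) :=
      Int.measurable_floor.comp (measurable_id.mul_const _)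
    exact (measurable_from_top (f := fun z : ℤ => ((z % (b:ℤ)).toNat : ℝ))).comp h1
  have hpart : ∀ N : ℕ, Measurable (fun x : ℝ =>
      ∑ k ∈ Finset.range N, (canonDigit b x (ψ k) : ℝ) / (b:ℝ)^(k+1)) := by
    intro N
    apply Finset.measurable_sum
    intro k _
    exact (hmd (ψ k)).div_const _
  apply measurable_of_tendsto_metrizable hpart
  rw [tendsto_pi_nhds]
  intro x
  have hd : ∀ k, canonDigit b x (ψ k) < b := fun k => digit_lt hb x (ψ k)
  exact (summable_digits hb hd).hasSum.tendsto_sum_nat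

lemma measurable_digitPerm (hb : 2 ≤ b) (φ : ℕ ≃ ℕ) : Measurable (digitPerm b φ) :=
  measurable_canonDigitPerm hb φ.symm

lemma not_eventually_perm (hb : 2 ≤ b) {a : ℕ → ℕ} (ψ : ℕ ≃ ℕ)
    (hne : ∀ n, ∃ m, n ≤ m ∧ a m + 1 < b) :
    ∀ n, ∃ m, n ≤ m ∧ a (ψ.symm m) + 1 < b := by
  intro n
  -- the set {j | a j + 1 < b} is infinite
  have hinf : {j : ℕ | a j + 1 < b}.Infinite := by
    apply Set.infinite_of_not_bddAbove
    rintro ⟨N, hN⟩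
    obtain ⟨m, hm1, hm2⟩ := hne (N+1)
    have : m ≤ N := hN hm2
    omega
  have himg : ((fun j => ψ j) '' {j : ℕ | a j + 1 < b}).Infinite :=
    Set.Infinite.image (fun u _ v _ h => ψ.injective h) hinf
  obtain ⟨m, hm, hge⟩ := himg.exists_gt n
  obtain ⟨j, hj, hjm⟩ := hm
  refine ⟨m, by omega, ?_⟩
  have : ψ.symm m = j := by rw [← hjm]; simp
  rw [this]; exact hj

lemma digitPerm_mapsTo (hb : 2 ≤ b) (φ : ℕ ≃ ℕ) :
    Set.MapsTo (digitPerm b φ) (Set.Ico (0:ℝ) 1) (Set.Ico (0:ℝ) 1) := by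
  intro x hx
  unfold digitPerm
  exact baseVal_mem hb (fun k => digit_lt hb x _)
    (not_eventually_perm hb φ (canonDigit_ne hb hx))

lemma digitPerm_comp (hb : 2 ≤ b) (φ : ℕ ≃ ℕ) {x : ℝ} (hx : x ∈ Set.Ico (0:ℝ) 1) :
    digitPerm b φ.symm (digitPerm b φ x) = x := by
  have ha : ∀ k, canonDigit b x (φ.symm k) < b := fun k => digit_lt hb x _
  have hne := not_eventually_perm hb φ (canonDigit_ne hb hx)
  have hdig : ∀ k, canonDigit b (digitPerm b φ x) k = canonDigit b x (φ.symm k) := by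
    intro k
    unfold digitPerm
    exact canonDigit_baseVal hb ha hne k
  unfold digitPerm
  have : (fun k => canonDigit b (digitPerm b φ x) (φ.symm.symm k))
      = fun k => canonDigit b x k := by
    funext k
    rw [Equiv.symm_symm, hdig (φ k), Equiv.symm_apply_apply]
  unfold digitPerm at this
  rw [this]
  exact baseVal_canonDigit hb hx

def extFn {N b : ℕ} (g : Fin N → Fin b) : ℕ → ℕ :=
  fun j => if h : j < N then (g ⟨j, h⟩ : ℕ) else 0

lemma extFn_lt (hb : 2 ≤ b) {N : ℕ} (g : Fin N → Fin b) (j : ℕ) : extFn g j < b := by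
  unfold extFn
  by_cases h : j < N
  · rw [dif_pos h]; exact (g ⟨j, h⟩).isLt
  · rw [dif_neg h]; omega

lemma card_constrained (hb : 2 ≤ b) {n N : ℕ} (hnN : n ≤ N) {p : ℕ → ℕ}
    (hp : Function.Injective p) (hN : ∀ k, k < n → p k < N) {c : ℕ → ℕ}
    (hc : ∀ k < n, c k < b) :
    Nat.card {g : Fin N → Fin b // ∀ k < n, extFn g (p k) = c k} = b ^ (N - n) := by
  classical
  have hQ : ∀ g : Fin N → Fin b,
      (∀ k < n, extFn g (p k) = c k) ↔ (∀ k, ∀ hk : k < n, (g ⟨p k, hN k hk⟩ : ℕ) = c k) := by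
    intro g
    constructor
    · intro h k hk
      have := h k hk
      unfold extFn at this
      rwa [dif_pos (hN k hk)] at this
    · intro h k hk
      unfold extFn
      rw [dif_pos (hN k hk)]
      exact h k hk
  -- equivalence with functions on unconstrained positions
  let R : Fin N → Prop := fun j => ∃ k, k < n ∧ p k = (j : ℕ)
  have e1 : {g : Fin N → Fin b // ∀ k < n, extFn g (p k) = c k}
      ≃ ({j : Fin N // ¬ R j} → Fin b) := by
    refine
      { toFun := fun G j => G.1 j.1
        invFun := fun h => ⟨fun j =>
          if hex : ∃ k, k < n ∧ p k = (j : ℕ) then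
            ⟨c (Nat.find hex), hc _ (Nat.find_spec hex).1⟩
          else h ⟨j, hex⟩, ?_⟩
        left_inv := ?_
        right_inv := ?_ }
    · rw [hQ]
      intro k hk
      have hex : ∃ k', k' < n ∧ p k' = ((⟨p k, hN k hk⟩ : Fin N) : ℕ) := ⟨k, hk, rfl⟩
      rw [dif_pos hex]
      have hspec := Nat.find_spec hex
      have : Nat.find hex = k := hp hspec.2
      simp [this]
    · intro G
      apply Subtype.ext
      funext j
      by_cases hex : ∃ k, k < n ∧ p k = (j : ℕ)
      · simp only [dif_pos hex]
        have hspec := Nat.find_spec hex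
        have hval := (hQ G.1).1 G.2 (Nat.find hex) hspec.1
        have harg : (⟨p (Nat.find hex), hN _ hspec.1⟩ : Fin N) = j := Fin.ext hspec.2
        rw [harg] at hval
        exact Fin.ext hval.symm
      · simp only [dif_neg hex]
    · intro h
      funext j
      exact dif_neg j.2
  have e2 : {j : Fin N // R j} ≃ Fin n := by
    refine
      { toFun := fun j => ⟨Nat.find j.2, (Nat.find_spec j.2).1⟩
        invFun := fun k => ⟨⟨p k, hN k k.2⟩, ⟨k, k.2, rfl⟩⟩
        left_inv := ?_
        right_inv := ?_ }
    · intro j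
      apply Subtype.ext
      apply Fin.ext
      exact (Nat.find_spec j.2).2
    · intro k
      apply Fin.ext
      have hex : ∃ k', k' < n ∧ p k' = ((⟨p k, hN k k.2⟩ : Fin N) : ℕ) := ⟨k, k.2, rfl⟩
      exact congrArg id (hp (Nat.find_spec hex).2)
  rw [Nat.card_congr e1]
  rw [Nat.card_fun]
  rw [Nat.card_eq_fintype_card (α := {j : Fin N // ¬ R j}), Fintype.card_subtype_compl]
  rw [← Nat.card_eq_fintype_card (α := {j : Fin N // R j}), Nat.card_congr e2]
  simp [Nat.card_eq_fintype_card]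

lemma measure_perm_cyl (hb : 2 ≤ b) {p : ℕ → ℕ} (hp : Function.Injective p)
    {n : ℕ} {c : ℕ → ℕ} (hc : ∀ k < n, c k < b) :
    volume {x ∈ Set.Ico (0:ℝ) 1 | ∀ k < n, canonDigit b x (p k) = c k}
      = ENNReal.ofReal (((b:ℝ)^n)⁻¹) := by
  classical
  have hB := Bpos hb
  set N := n + (Finset.range n).sup (fun k => p k + 1) with hNdef
  have hnN : n ≤ N := by omega
  have hN : ∀ k, k < n → p k < N := by
    intro k hk
    have : p k + 1 ≤ (Finset.range n).sup (fun k => p k + 1) :=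
      Finset.le_sup (f := fun k => p k + 1) (Finset.mem_range.2 hk)
    omega
  -- index type
  set ST := {g : Fin N → Fin b // ∀ k < n, extFn g (p k) = c k} with hST
  have hext : ∀ g : Fin N → Fin b, ∀ j < N, extFn g j < b := fun g j _ => extFn_lt hb g j
  set cylS : (Fin N → Fin b) → Set ℝ := fun g =>
    {x ∈ Set.Ico (0:ℝ) 1 | ∀ j < N, canonDigit b x j = extFn g j} with hcylS
  have hcyl_eq : ∀ g : Fin N → Fin b, cylS g
      = Set.Ico (((zc b (extFn g) N : ℤ) : ℝ) / (b:ℝ)^N)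
          ((((zc b (extFn g) N : ℤ) : ℝ) + 1) / (b:ℝ)^N) := fun g =>
    cyl_eq hb (fun j hj => extFn_lt hb g j)
  have hunion : {x ∈ Set.Ico (0:ℝ) 1 | ∀ k < n, canonDigit b x (p k) = c k}
      = ⋃ G : ST, cylS G.1 := by
    ext x
    simp only [Set.mem_setOf_eq, Set.mem_iUnion]
    constructor
    · rintro ⟨hx, h⟩
      refine ⟨⟨fun j => ⟨canonDigit b x j, digit_lt hb x j⟩, ?_⟩, hx, fun j hj => ?_⟩
      · intro k hk
        unfold extFn
        rw [dif_pos (hN k hk)]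
        exact h k hk
      · unfold extFn
        rw [dif_pos hj]
    · rintro ⟨G, hx, h⟩
      refine ⟨hx, fun k hk => ?_⟩
      have h1 := h (p k) (hN k hk)
      have h2 := G.2 k hk
      rw [h1, h2]
  rw [hunion]
  have hdisj : Pairwise (Function.onFun Disjoint fun G : ST => cylS G.1) := by
    intro G G' hne
    rw [Function.onFun, Set.disjoint_left]
    intro x hx hx'
    apply hne
    apply Subtype.ext
    funext j
    apply Fin.ext
    have e1 := hx.2 j.1 j.2
    have e2 := hx'.2 j.1 j.2
    have : extFn G.1 j.1 = extFn G'.1 j.1 := by rw [← e1, ← e2]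
    unfold extFn at this
    rw [dif_pos j.2, dif_pos j.2] at this
    simpa using this
  have hmeas : ∀ G : ST, MeasurableSet (cylS G.1) := by
    intro G
    rw [hcyl_eq]
    exact measurableSet_Ico
  rw [measure_iUnion hdisj hmeas]
  have hvol : ∀ G : ST, volume (cylS G.1) = ENNReal.ofReal (((b:ℝ)^N)⁻¹) := by
    intro G
    rw [hcyl_eq, Real.volume_Ico]
    congr 1
    have hpow : ((b:ℝ))^N ≠ 0 := by positivity
    field_simp
    ring
  rw [tsum_congr hvol, tsum_fintype, Finset.sum_const, Finset.card_univ]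
  have hcard : Fintype.card ST = b ^ (N - n) := by
    rw [← Nat.card_eq_fintype_card]
    exact card_constrained hb hnN hp hN hc
  rw [hcard, nsmul_eq_mul]
  rw [← ENNReal.ofReal_natCast (b ^ (N - n)), ← ENNReal.ofReal_mul (by positivity)]
  congr 1
  push_cast
  have hsplit : (b:ℝ)^N = (b:ℝ)^(N - n) * (b:ℝ)^n := by
    rw [← pow_add]
    congr 1
    omega
  rw [hsplit]
  have h1 : ((b:ℝ))^(N-n) ≠ 0 := by positivity
  have h2 : ((b:ℝ))^n ≠ 0 := by positivity
  field_simp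

lemma canonDigit_digitPerm (hb : 2 ≤ b) (φ : ℕ ≃ ℕ) {x : ℝ} (hx : x ∈ Set.Ico (0:ℝ) 1)
    (k : ℕ) : canonDigit b (digitPerm b φ x) k = canonDigit b x (φ.symm k) := by
  unfold digitPerm
  exact canonDigit_baseVal hb (fun k => digit_lt hb x _)
    (not_eventually_perm hb φ (canonDigit_ne hb hx)) k

lemma map_Ico_base (hb : 2 ≤ b) (φ : ℕ ≃ ℕ) (n : ℕ) (m : ℤ) (h0 : 0 ≤ m)
    (h1 : m < (b:ℤ)^n) :
    Measure.map (digitPerm b φ) (volume.restrict (Set.Ico (0:ℝ) 1))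
      (Set.Ico ((m:ℝ)/(b:ℝ)^n) (((m:ℝ)+1)/(b:ℝ)^n)) = ENNReal.ofReal (((b:ℝ)^n)⁻¹) := by
  obtain ⟨c, hclt, hzc⟩ := zc_surj hb n m h0 h1
  have hT := measurable_digitPerm hb φ
  rw [Measure.map_apply hT measurableSet_Ico, Measure.restrict_apply (hT measurableSet_Ico)]
  have hset : digitPerm b φ ⁻¹' (Set.Ico ((m:ℝ)/(b:ℝ)^n) (((m:ℝ)+1)/(b:ℝ)^n)) ∩ Set.Ico 0 1
      = {x ∈ Set.Ico (0:ℝ) 1 | ∀ k < n, canonDigit b x (φ.symm k) = c k} := by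
    have hcyl := cyl_eq hb (n := n) (c := c) (fun k _ => hclt k)
    rw [hzc] at hcyl
    ext x
    simp only [Set.mem_inter_iff, Set.mem_preimage, Set.mem_setOf_eq]
    constructor
    · rintro ⟨hTx, hx⟩
      refine ⟨hx, ?_⟩
      have hmem : digitPerm b φ x ∈
          {y ∈ Set.Ico (0:ℝ) 1 | ∀ k < n, canonDigit b y k = c k} := by
        rw [hcyl]; exact hTx
      intro k hk
      rw [← canonDigit_digitPerm hb φ hx k]
      exact hmem.2 k hk
    · rintro ⟨hx, h⟩
      refine ⟨?_, hx⟩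
      have hmem : digitPerm b φ x ∈
          {y ∈ Set.Ico (0:ℝ) 1 | ∀ k < n, canonDigit b y k = c k} := by
        refine ⟨digitPerm_mapsTo hb φ hx, fun k hk => ?_⟩
        rw [canonDigit_digitPerm hb φ hx k]; exact h k hk
      rw [hcyl] at hmem
      exact hmem
  rw [hset]
  exact measure_perm_cyl hb φ.symm.injective (fun k _ => hclt k)

lemma map_Ico_zero_le (hb : 2 ≤ b) (φ : ℕ ≃ ℕ) (n : ℕ) :
    ∀ m : ℕ, m ≤ b^n →
    Measure.map (digitPerm b φ) (volume.restrict (Set.Ico (0:ℝ) 1))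
      (Set.Ico (0:ℝ) ((m:ℝ)/(b:ℝ)^n)) = ENNReal.ofReal ((m:ℝ)/(b:ℝ)^n) := by
  have hB := Bpos hb
  have hpow : (0:ℝ) < (b:ℝ)^n := by positivity
  intro m
  induction m with
  | zero => simp
  | succ m ih =>
    intro hm1
    have hm : m ≤ b^n := by omega
    have h1 : (0:ℝ) ≤ (m:ℝ)/(b:ℝ)^n := by positivity
    have h2 : (m:ℝ)/(b:ℝ)^n ≤ ((m:ℝ)+1)/(b:ℝ)^n := by gcongr; linarith
    have hcast : ((m+1:ℕ):ℝ) = (m:ℝ)+1 := by push_cast; ring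
    rw [hcast, ← Set.Ico_union_Ico_eq_Ico h1 h2]
    have hdisj : Disjoint (Set.Ico (0:ℝ) ((m:ℝ)/(b:ℝ)^n))
        (Set.Ico ((m:ℝ)/(b:ℝ)^n) (((m:ℝ)+1)/(b:ℝ)^n)) := by
      apply Set.disjoint_left.2
      rintro y ⟨_, hy1⟩ ⟨hy2, _⟩
      exact absurd hy2 (not_le.2 hy1)
    rw [measure_union hdisj measurableSet_Ico]
    have hZ : ((m:ℕ):ℤ) < (b:ℤ)^n := by exact_mod_cast (by omega : m < b^n)
    have hbase := map_Ico_base hb φ n (m:ℤ) (by positivity) hZ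
    have hc2 : (((m:ℤ)):ℝ) = (m:ℝ) := by push_cast; ring
    rw [hc2] at hbase
    rw [ih hm, hbase, ← ENNReal.ofReal_add (by positivity) (by positivity)]
    congr 1
    field_simp

lemma map_univ (hb : 2 ≤ b) (φ : ℕ ≃ ℕ) :
    Measure.map (digitPerm b φ) (volume.restrict (Set.Ico (0:ℝ) 1)) Set.univ = 1 := by
  have hT := measurable_digitPerm hb φ
  rw [Measure.map_apply hT MeasurableSet.univ, Set.preimage_univ,
    Measure.restrict_apply MeasurableSet.univ, Set.univ_inter, Real.volume_Ico]
  norm_num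

lemma map_Ico_t (hb : 2 ≤ b) (φ : ℕ ≃ ℕ) {t : ℝ} (h0 : 0 ≤ t) (h1 : t ≤ 1) :
    Measure.map (digitPerm b φ) (volume.restrict (Set.Ico (0:ℝ) 1))
      (Set.Ico (0:ℝ) t) = ENNReal.ofReal t := by
  have hB := Bpos hb
  set ν := Measure.map (digitPerm b φ) (volume.restrict (Set.Ico (0:ℝ) 1)) with hν
  have hfin : ν (Set.Ico (0:ℝ) t) ≠ ⊤ := by
    refine ne_top_of_le_ne_top ?_ (measure_mono (Set.subset_univ _))
    rw [map_univ hb φ]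
    exact ENNReal.one_ne_top
  rcases eq_or_lt_of_le h1 with h1' | h1'
  · subst h1'
    have := map_Ico_zero_le hb φ 0 1 (by norm_num)
    simpa using this
  · set r := (ν (Set.Ico (0:ℝ) t)).toReal with hr
    have hbound : ∀ n : ℕ, |r - t| ≤ ((b:ℝ)^n)⁻¹ := by
      intro n
      have hpow : (0:ℝ) < (b:ℝ)^n := by positivity
      set m : ℕ := (⌊t * (b:ℝ)^n⌋).toNat with hm
      have hfl0 : (0:ℤ) ≤ ⌊t * (b:ℝ)^n⌋ := Int.floor_nonneg.2 (by positivity)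
      have hmc : ((m:ℕ):ℝ) = ((⌊t * (b:ℝ)^n⌋ : ℤ) : ℝ) := by
        rw [hm]
        have := Int.toNat_of_nonneg hfl0
        exact_mod_cast congrArg (fun z : ℤ => (z : ℝ)) this
      have hle1 : (m:ℝ) ≤ t * (b:ℝ)^n := by rw [hmc]; exact Int.floor_le _
      have hlt2 : t * (b:ℝ)^n < (m:ℝ) + 1 := by rw [hmc]; exact Int.lt_floor_add_one _
      have hmb : m + 1 ≤ b^n := by
        have ht2 : t * (b:ℝ)^n < (b:ℝ)^n := by nlinarith
        have : (m:ℝ) < (b:ℝ)^n := by linarith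
        have : (m:ℝ) < ((b^n : ℕ) : ℝ) := by push_cast; linarith
        exact_mod_cast Nat.succ_le_of_lt (by exact_mod_cast this)
      have hlow : ENNReal.ofReal ((m:ℝ)/(b:ℝ)^n) ≤ ν (Set.Ico (0:ℝ) t) := by
        rw [← map_Ico_zero_le hb φ n m (by omega)]
        apply measure_mono
        apply Set.Ico_subset_Ico_right
        rw [div_le_iff₀ hpow]; linarith
      have hhigh : ν (Set.Ico (0:ℝ) t) ≤ ENNReal.ofReal (((m:ℝ)+1)/(b:ℝ)^n) := by
        have := map_Ico_zero_le hb φ n (m+1) hmb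
        have hcast : ((m+1:ℕ):ℝ) = (m:ℝ)+1 := by push_cast; ring
        rw [hcast] at this
        rw [← this]
        apply measure_mono
        apply Set.Ico_subset_Ico_right
        rw [le_div_iff₀ hpow]; nlinarith
      have l1 : (m:ℝ)/(b:ℝ)^n ≤ r := by
        have h := ENNReal.toReal_mono hfin hlow
        rwa [ENNReal.toReal_ofReal (by positivity)] at h
      have l2 : r ≤ ((m:ℝ)+1)/(b:ℝ)^n := by
        have h := ENNReal.toReal_mono ENNReal.ofReal_ne_top hhigh
        rwa [ENNReal.toReal_ofReal (by positivity)] at h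
      have lt1 : (m:ℝ)/(b:ℝ)^n ≤ t := by rw [div_le_iff₀ hpow]; linarith
      have lt2 : t ≤ ((m:ℝ)+1)/(b:ℝ)^n := by rw [le_div_iff₀ hpow]; nlinarith
      have hgap : ((m:ℝ)+1)/(b:ℝ)^n - (m:ℝ)/(b:ℝ)^n = ((b:ℝ)^n)⁻¹ := by field_simp; ring
      rw [abs_sub_le_iff]
      constructor <;> linarith
    have hrt : r = t := by
      by_contra hne
      have habs : 0 < |r - t| := abs_pos.2 (sub_ne_zero.2 hne)
      obtain ⟨n, hn⟩ := exists_pow_lt_of_lt_one habs (inv_lt_one_of_one_lt₀ (B1 hb))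
      have := hbound n
      rw [← inv_pow] at this
      linarith
    rw [← ENNReal.ofReal_toReal hfin, ← hr, hrt]

lemma map_eq (hb : 2 ≤ b) (φ : ℕ ≃ ℕ) :
    Measure.map (digitPerm b φ) (volume.restrict (Set.Ico (0:ℝ) 1))
      = volume.restrict (Set.Ico (0:ℝ) 1) := by
  have hT := measurable_digitPerm hb φ
  set ν := Measure.map (digitPerm b φ) (volume.restrict (Set.Ico (0:ℝ) 1)) with hν
  haveI hfinmeas : IsFiniteMeasure ν := ⟨by rw [hν, map_univ hb φ]; exact ENNReal.one_lt_top⟩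
  have hnull : ν ((Set.Ico (0:ℝ) 1)ᶜ) = 0 := by
    rw [hν, Measure.map_apply hT measurableSet_Ico.compl,
      Measure.restrict_apply (hT measurableSet_Ico.compl)]
    have he : digitPerm b φ ⁻¹' (Set.Ico (0:ℝ) 1)ᶜ ∩ Set.Ico 0 1 = ∅ := by
      ext x
      simp only [Set.mem_inter_iff, Set.mem_preimage, Set.mem_compl_iff,
        Set.mem_empty_iff_false, iff_false, not_and]
      intro hc hx
      exact hc (digitPerm_mapsTo hb φ hx)
    rw [he, measure_empty]
  have hrestrict : ∀ s : Set ℝ, ν s = ν (s ∩ Set.Ico 0 1) := by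
    intro s
    have h1 := measure_inter_add_diff (μ := ν) s (measurableSet_Ico (a := (0:ℝ)) (b := 1))
    have hdiff : ν (s \ Set.Ico 0 1) = 0 :=
      measure_mono_null (fun x hx => hx.2) hnull
    rw [hdiff, add_zero] at h1
    exact h1.symm
  have hclaim : ∀ a' c' : ℝ, 0 ≤ a' → c' ≤ 1 → ν (Set.Ico a' c') = ENNReal.ofReal (c' - a') := by
    intro a' c' ha hc
    rcases le_or_gt c' a' with hle | hlt
    · rw [Set.Ico_eq_empty (not_lt.2 hle), measure_empty, eq_comm]
      exact ENNReal.ofReal_eq_zero.2 (by linarith)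
    · have hc0 : 0 ≤ c' := le_trans ha hlt.le
      have e : Set.Ico (0:ℝ) c' \ Set.Ico 0 a' = Set.Ico a' c' := by
        ext x
        simp only [Set.mem_diff, Set.mem_Ico, not_and, not_lt]
        constructor
        · rintro ⟨⟨h0x, hxc⟩, h2⟩; exact ⟨h2 h0x, hxc⟩
        · rintro ⟨h1x, hxc⟩; exact ⟨⟨le_trans ha h1x, hxc⟩, fun _ => h1x⟩
      have hsub : Set.Ico (0:ℝ) a' ⊆ Set.Ico (0:ℝ) c' :=
        Set.Ico_subset_Ico_right hlt.le
      rw [← e, measure_diff hsub measurableSet_Ico.nullMeasurableSet (measure_ne_top ν _)]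
      rw [hν, map_Ico_t hb φ ha (le_trans hlt.le hc), map_Ico_t hb φ hc0 hc,
        ← ENNReal.ofReal_sub _ ha]
  refine Measure.ext_of_Ico ν _ (fun a c hac => ?_)
  rw [Measure.restrict_apply measurableSet_Ico, Set.Ico_inter_Ico, Real.volume_Ico]
  rw [hrestrict (Set.Ico a c), Set.Ico_inter_Ico]
  exact hclaim _ _ (le_max_right a 0) (min_le_right c 1)

end DigitPermProof

/-- For every integer `b ≥ 2` and every bijection `φ : ℕ → ℕ`, the
digit-permutation map `T^b_φ` is a bijection of `[0,1)` onto itself and preserves Lebesgue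
measure: the pushforward of `λ` restricted to `[0,1)` under `T^b_φ` equals `λ` restricted
to `[0,1)`. -/
theorem digitPerm_bijOn_and_measurePreserving (b : ℕ) (hb : 2 ≤ b) (φ : ℕ ≃ ℕ) :
    Set.BijOn (digitPerm b φ) (Set.Ico (0 : ℝ) 1) (Set.Ico (0 : ℝ) 1) ∧
    Measure.map (digitPerm b φ) (volume.restrict (Set.Ico (0 : ℝ) 1))
      = volume.restrict (Set.Ico (0 : ℝ) 1) := by
  constructor
  · apply Set.InvOn.bijOn (f' := digitPerm b φ.symm)
    · constructor
      · intro x hx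
        exact DigitPermProof.digitPerm_comp hb φ hx
      · intro y hy
        have := DigitPermProof.digitPerm_comp hb φ.symm hy
        rwa [Equiv.symm_symm] at this
    · exact DigitPermProof.digitPerm_mapsTo hb φ
    · exact DigitPermProof.digitPerm_mapsTo hb φ.symm
  · exact DigitPermProof.map_eq hb φ
end

section
/- Let b ≥ 2 be an integer, φ : ℕ → ℕ a bijection, and I = [m·b^{−p}, (m+1)·b^{−p}) a base-b interval of generation p ≥ 1 (so 0 ≤ m < b^p). Set N = 1 + max{φ(k) : 0 ≤ k < p}. Then the image T^b_φ(I) coincides, up to a Lebesgue-null set, with a union of b^{N−p} pairwise disjoint base-b intervals of generation N; in particular λ(T^b_φ(I)) = b^{−p} = λ(I). -/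
open MeasureTheory

open Finset


lemma dp_sum_lt {b : ℕ} (hb : 1 ≤ b) (e : ℕ → ℕ) (he : ∀ i, e i < b) (n : ℕ) :
    ∑ i ∈ range n, e i * b ^ i < b ^ n := by
  induction n with
  | zero => simp
  | succ n ih =>
    rw [Finset.sum_range_succ, pow_succ]
    have h1 : e n * b ^ n ≤ (b - 1) * b ^ n :=
      Nat.mul_le_mul_right _ (by have := he n; omega)
    have h2 : b ^ n + (b - 1) * b ^ n = b ^ n * b := by
      have h3 : b ^ n + (b - 1) * b ^ n = (1 + (b - 1)) * b ^ n := by ring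
      have h4 : 1 + (b - 1) = b := by omega
      rw [h3, h4]; ring
    omega

lemma dp_reflect (b : ℕ) (e : ℕ → ℕ) (N : ℕ) :
    ∑ j ∈ range N, e j * b ^ (N - 1 - j) = ∑ i ∈ range N, e (N - 1 - i) * b ^ i := by
  rw [← Finset.sum_range_reflect]
  refine Finset.sum_congr rfl fun j hj => ?_
  have hj' : j < N := Finset.mem_range.mp hj
  have h : N - 1 - (N - 1 - j) = j := by omega
  rw [h]

lemma dp_digit_sum {b : ℕ} (hb : 1 ≤ b) (e : ℕ → ℕ) (he : ∀ i, e i < b) {n i0 : ℕ}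
    (h : i0 < n) :
    (∑ i ∈ range n, e i * b ^ i) / b ^ i0 % b = e i0 := by
  have hsplit : ∑ i ∈ range n, e i * b ^ i
      = (∑ i ∈ range i0, e i * b ^ i) + ∑ i ∈ Finset.Ico i0 n, e i * b ^ i := by
    rw [Finset.range_eq_Ico, ← Finset.sum_Ico_consecutive _ (Nat.zero_le i0) h.le, Finset.range_eq_Ico]
  have hA : (∑ i ∈ range i0, e i * b ^ i) < b ^ i0 := dp_sum_lt hb e he i0
  have hIco : ∑ i ∈ Finset.Ico i0 n, e i * b ^ i
      = b ^ i0 * ∑ j ∈ range (n - i0), e (i0 + j) * b ^ j := by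
    rw [Finset.sum_Ico_eq_sum_range, Finset.mul_sum]
    refine Finset.sum_congr rfl fun j _ => ?_
    rw [pow_add]; ring
  have hni : n - i0 = (n - i0 - 1) + 1 := by omega
  have hS : ∑ j ∈ range (n - i0), e (i0 + j) * b ^ j
      = e i0 + b * ∑ j ∈ range (n - i0 - 1), e (i0 + (j + 1)) * b ^ j := by
    rw [hni, Finset.sum_range_succ' (fun j => e (i0 + j) * b ^ j)]
    rw [add_comm, Finset.mul_sum]
    simp only [pow_zero, add_zero, mul_one]
    congr 1
    refine Finset.sum_congr rfl fun j _ => ?_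
    rw [pow_succ]; ring
  rw [hsplit, hIco, hS]
  rw [Nat.add_mul_div_left _ _ (pow_pos (by omega : 0 < b) i0), Nat.div_eq_of_lt hA, zero_add,
    Nat.add_mul_mod_self_left, Nat.mod_eq_of_lt (he i0)]

lemma dp_digits_reconstruct {b : ℕ} (m : ℕ) (n : ℕ) :
    ∑ i ∈ range n, (m / b ^ i % b) * b ^ i = m % b ^ n := by
  induction n with
  | zero => simp [Nat.mod_one]
  | succ n ih =>
    rw [Finset.sum_range_succ, ih, pow_succ, Nat.mod_mul]
    ring

lemma dp_one_lt {b : ℕ} (hb : 2 ≤ b) : (1 : ℝ) < (b : ℝ) := by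
  exact_mod_cast lt_of_lt_of_le one_lt_two hb

lemma dp_bpos {b : ℕ} (hb : 2 ≤ b) : (0 : ℝ) < (b : ℝ) := lt_trans one_pos (dp_one_lt hb)

/-- For x ≥ 0, the canonical digit is a `Nat.floor` mod. -/
lemma dp_canonDigit_eq {b : ℕ} (hb : 2 ≤ b) {x : ℝ} (hx : 0 ≤ x) (k : ℕ) :
    canonDigit b x k = ⌊x * (b : ℝ) ^ (k + 1)⌋₊ % b := by
  have h0 : (0:ℝ) ≤ x * (b : ℝ) ^ (k + 1) :=
    mul_nonneg hx (pow_nonneg (dp_bpos hb).le _)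
  have hfl : ⌊x * (b : ℝ) ^ (k + 1)⌋ = (⌊x * (b : ℝ) ^ (k + 1)⌋₊ : ℤ) := by
    rw [← Int.floor_toNat]
    exact (Int.toNat_of_nonneg (Int.floor_nonneg.mpr h0)).symm
  rw [canonDigit, hfl]
  have h2 : ((⌊x * (b : ℝ) ^ (k + 1)⌋₊ : ℤ)) % (b : ℤ)
      = ((⌊x * (b : ℝ) ^ (k + 1)⌋₊ % b : ℕ) : ℤ) := by push_cast; ring
  rw [h2, Int.toNat_natCast]

lemma dp_canonDigit_lt {b : ℕ} (hb : 2 ≤ b) {x : ℝ} (hx : 0 ≤ x) (k : ℕ) :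
    canonDigit b x k < b := by
  rw [dp_canonDigit_eq hb hx]
  exact Nat.mod_lt _ (by omega)

/-- Floor compatibility across scales. -/
lemma dp_floor_div {b : ℕ} (hb : 2 ≤ b) {x : ℝ} (hx : 0 ≤ x) {j n : ℕ} (h : j ≤ n) :
    ⌊x * (b : ℝ) ^ j⌋₊ = ⌊x * (b : ℝ) ^ n⌋₊ / b ^ (n - j) := by
  have hbR : (0:ℝ) < (b:ℝ) := dp_bpos hb
  have he : x * (b : ℝ) ^ j = (x * (b : ℝ) ^ n) / ((b ^ (n - j) : ℕ) : ℝ) := by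
    have hn : n = j + (n - j) := by omega
    rw [hn, pow_add, Nat.add_sub_cancel_left]
    push_cast
    field_simp
  rw [he, Nat.floor_div_natCast]

lemma dp_floor_succ {b : ℕ} (hb : 2 ≤ b) {x : ℝ} (hx : 0 ≤ x) (n : ℕ) :
    ⌊x * (b : ℝ) ^ (n + 1)⌋₊ = b * ⌊x * (b : ℝ) ^ n⌋₊ + canonDigit b x n := by
  have h1 : ⌊x * (b : ℝ) ^ n⌋₊ = ⌊x * (b : ℝ) ^ (n + 1)⌋₊ / b ^ 1 := by
    have := dp_floor_div hb hx (n := n + 1) (j := n) (by omega)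
    simpa using this
  have h2 := Nat.div_add_mod (⌊x * (b:ℝ) ^ (n+1)⌋₊) b
  rw [dp_canonDigit_eq hb hx, h1, pow_one]
  omega

/-- Partial sums of canonical digits equal the floor approximation. -/
lemma dp_partial {b : ℕ} (hb : 2 ≤ b) {x : ℝ} (hx : 0 ≤ x) (hx1 : x < 1) (n : ℕ) :
    ∑ k ∈ range n, (canonDigit b x k : ℝ) / (b : ℝ) ^ (k + 1)
      = (⌊x * (b : ℝ) ^ n⌋₊ : ℝ) / (b : ℝ) ^ n := by
  have hbR : (0:ℝ) < (b:ℝ) := dp_bpos hb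
  induction n with
  | zero =>
    have h0 : ⌊x⌋₊ = 0 := Nat.floor_eq_zero.mpr hx1
    simp [h0]
  | succ n ih =>
    rw [Finset.sum_range_succ, ih, dp_floor_succ hb hx n]
    have hbn : (b:ℝ) ^ n ≠ 0 := by positivity
    have hbn1 : (b:ℝ) ^ (n+1) ≠ 0 := by positivity
    push_cast
    field_simp
    ring


lemma dp_summable {b : ℕ} (hb : 2 ≤ b) (a : ℕ → ℕ) (ha : ∀ k, a k < b) :
    Summable (fun k => (a k : ℝ) / (b : ℝ) ^ (k + 1)) := by
  have hbR : (1:ℝ) < (b:ℝ) := dp_one_lt hb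
  have h01 : (0:ℝ) ≤ 1 / (b:ℝ) := by positivity
  have h11 : 1 / (b:ℝ) < 1 := by
    rw [div_lt_one (by linarith)]; linarith
  refine Summable.of_nonneg_of_le (fun k => by positivity) (fun k => ?_)
    (summable_geometric_of_lt_one h01 h11)
  have hk : (a k : ℝ) ≤ (b:ℝ) := by
    exact_mod_cast (ha k).le
  have hpow : (0:ℝ) < (b:ℝ) ^ (k+1) := by positivity
  rw [div_pow, one_pow]
  rw [div_le_div_iff₀ hpow (by positivity)]
  calc (a k : ℝ) * (b:ℝ) ^ k ≤ (b:ℝ) * (b:ℝ) ^ k := by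
        exact mul_le_mul_of_nonneg_right hk (by positivity)
    _ = 1 * (b:ℝ) ^ (k+1) := by ring
  
lemma dp_tail_full {b : ℕ} (hb : 2 ≤ b) (n : ℕ) :
    ∑' j : ℕ, ((b:ℝ) - 1) / (b : ℝ) ^ (n + j + 1) = 1 / (b : ℝ) ^ n := by
  have hbR : (1:ℝ) < (b:ℝ) := dp_one_lt hb
  have h01 : (0:ℝ) ≤ 1 / (b:ℝ) := by positivity
  have h11 : 1 / (b:ℝ) < 1 := by rw [div_lt_one (by linarith)]; linarith
  have hterm : ∀ j : ℕ, ((b:ℝ) - 1) / (b : ℝ) ^ (n + j + 1)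
      = (((b:ℝ) - 1) / (b:ℝ) ^ (n+1)) * (1 / (b:ℝ)) ^ j := by
    intro j
    rw [div_pow, one_pow]
    have : (b:ℝ) ^ (n + j + 1) = (b:ℝ) ^ (n + 1) * (b:ℝ) ^ j := by
      rw [← pow_add]; ring_nf
    rw [this]
    field_simp
  rw [tsum_congr hterm, tsum_mul_left, tsum_geometric_of_lt_one h01 h11]
  have hb0 : (b:ℝ) ≠ 0 := by linarith
  have h1b : 1 - 1/(b:ℝ) = ((b:ℝ) - 1)/(b:ℝ) := by field_simp
  rw [h1b]
  rw [pow_succ]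
  have hbm1 : (b:ℝ) - 1 ≠ 0 := by linarith
  field_simp

/-- `baseVal` of canonical digits recovers `x`. -/
lemma dp_baseVal_canon {b : ℕ} (hb : 2 ≤ b) {x : ℝ} (hx : 0 ≤ x) (hx1 : x < 1) :
    baseVal b (canonDigit b x) = x := by
  have hbR : (1:ℝ) < (b:ℝ) := dp_one_lt hb
  have hsum : Summable (fun k => (canonDigit b x k : ℝ) / (b : ℝ) ^ (k + 1)) :=
    dp_summable hb _ (dp_canonDigit_lt hb hx)
  have hHS := hsum.hasSum
  have hT1 : Filter.Tendsto (fun n => ∑ k ∈ Finset.range n,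
      (canonDigit b x k : ℝ) / (b : ℝ) ^ (k + 1)) Filter.atTop (nhds (baseVal b (canonDigit b x))) :=
    hHS.tendsto_sum_nat
  have hT2 : Filter.Tendsto (fun n => ∑ k ∈ Finset.range n,
      (canonDigit b x k : ℝ) / (b : ℝ) ^ (k + 1)) Filter.atTop (nhds x) := by
    have hlow : ∀ n : ℕ, x - (1/(b:ℝ)) ^ n ≤ ∑ k ∈ Finset.range n,
        (canonDigit b x k : ℝ) / (b : ℝ) ^ (k + 1) := by
      intro n
      rw [dp_partial hb hx hx1 n]
      have hpow : (0:ℝ) < (b:ℝ) ^ n := by positivity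
      have hfl : x * (b:ℝ) ^ n < ⌊x * (b:ℝ) ^ n⌋₊ + 1 := Nat.lt_floor_add_one _
      have h1 : (1/(b:ℝ))^n = 1/(b:ℝ)^n := by rw [div_pow, one_pow]
      rw [h1, sub_le_iff_le_add, ← add_div, le_div_iff₀ hpow]
      linarith
    have hhigh : ∀ n : ℕ, (∑ k ∈ Finset.range n,
        (canonDigit b x k : ℝ) / (b : ℝ) ^ (k + 1)) ≤ x := by
      intro n
      rw [dp_partial hb hx hx1 n]
      have hpow : (0:ℝ) < (b:ℝ) ^ n := by positivity
      have hfl : (⌊x * (b:ℝ) ^ n⌋₊ : ℝ) ≤ x * (b:ℝ) ^ n :=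
        Nat.floor_le (by positivity)
      rw [div_le_iff₀ hpow]
      linarith
    have hgeo : Filter.Tendsto (fun n : ℕ => x - (1/(b:ℝ)) ^ n) Filter.atTop (nhds x) := by
      have : Filter.Tendsto (fun n : ℕ => (1/(b:ℝ)) ^ n) Filter.atTop (nhds 0) := by
        apply tendsto_pow_atTop_nhds_zero_of_lt_one (by positivity)
        rw [div_lt_one (by linarith)]; linarith
      simpa using Filter.Tendsto.const_sub x this
    exact tendsto_of_tendsto_of_tendsto_of_le_of_le hgeo tendsto_const_nhds hlow hhigh
  have := tendsto_nhds_unique hT1 hT2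
  simpa [baseVal] using this

/-- Canonical expansions are never eventually `b - 1`. -/
lemma dp_not_ev {b : ℕ} (hb : 2 ≤ b) {x : ℝ} (hx : 0 ≤ x) (hx1 : x < 1) (M : ℕ)
    (hev : ∀ k, M ≤ k → canonDigit b x k = b - 1) : False := by
  have hbR : (1:ℝ) < (b:ℝ) := dp_one_lt hb
  have hsum : Summable (fun k => (canonDigit b x k : ℝ) / (b : ℝ) ^ (k + 1)) :=
    dp_summable hb _ (dp_canonDigit_lt hb hx)
  have hsplit := Summable.sum_add_tsum_nat_add (f := fun k => (canonDigit b x k : ℝ) / (b : ℝ) ^ (k + 1))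
    M hsum
  have htail : ∑' j : ℕ, (canonDigit b x (j + M) : ℝ) / (b : ℝ) ^ ((j + M) + 1)
      = 1 / (b:ℝ) ^ M := by
    rw [← dp_tail_full hb M]
    apply tsum_congr
    intro j
    rw [hev (j + M) (by omega)]
    have : ((b - 1 : ℕ) : ℝ) = (b : ℝ) - 1 := by
      have : (1:ℕ) ≤ b := by omega
      push_cast [this]; ring
    rw [this]
    ring_nf
  have hx' : baseVal b (canonDigit b x) = x := dp_baseVal_canon hb hx hx1
  rw [baseVal] at hx'
  rw [htail, dp_partial hb hx hx1 M] at hsplit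
  have hfl : x * (b:ℝ) ^ M < ⌊x * (b:ℝ) ^ M⌋₊ + 1 := Nat.lt_floor_add_one _
  have hpow : (0:ℝ) < (b:ℝ) ^ M := by positivity
  rw [hx'] at hsplit
  have : x * (b:ℝ) ^ M = (⌊x * (b:ℝ) ^ M⌋₊ : ℝ) + 1 := by
    field_simp at hsplit ⊢
    nlinarith [hsplit]
  linarith

lemma dp_sum_shift {b : ℕ} (hb : 2 ≤ b) (a : ℕ → ℕ) (q : ℕ) :
    ∑ k ∈ Finset.range q, (a k : ℝ) / (b : ℝ) ^ (k + 1)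
      = ((∑ k ∈ Finset.range q, a k * b ^ (q - 1 - k) : ℕ) : ℝ) / (b : ℝ) ^ q := by
  have hbR : (1:ℝ) < (b:ℝ) := dp_one_lt hb
  push_cast
  rw [Finset.sum_div]
  refine Finset.sum_congr rfl fun k hk => ?_
  have hk' : k < q := Finset.mem_range.mp hk
  have hq : (q - 1 - k) + (k + 1) = q := by omega
  have hpow : (b:ℝ) ^ q = (b:ℝ) ^ (q - 1 - k) * (b:ℝ) ^ (k + 1) := by
    rw [← pow_add, hq]
  rw [hpow]
  have h1 : (b:ℝ) ^ (q - 1 - k) ≠ 0 := by positivity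
  have h2 : (b:ℝ) ^ (k + 1) ≠ 0 := by positivity
  field_simp

set_option maxHeartbeats 1000000 in
/-- The canonical digits of `baseVal b a` recover `a` when the digits are `< b` and
not eventually `b - 1`. -/
lemma dp_canon_baseVal {b : ℕ} (hb : 2 ≤ b) (a : ℕ → ℕ) (ha : ∀ k, a k < b)
    (hne : ∀ M : ℕ, ∃ k, M ≤ k ∧ a k ≠ b - 1) :
    0 ≤ baseVal b a ∧ baseVal b a < 1 ∧ ∀ k, canonDigit b (baseVal b a) k = a k := by
  have hbR : (1:ℝ) < (b:ℝ) := dp_one_lt hb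
  have hsum : Summable (fun k => (a k : ℝ) / (b : ℝ) ^ (k + 1)) := dp_summable hb a ha
  have hcast1 : ((b - 1 : ℕ) : ℝ) = (b:ℝ) - 1 := by
    have h1 : (1:ℕ) ≤ b := by omega
    push_cast [h1]; ring
  -- tail estimates
  have htail : ∀ n : ℕ, 0 ≤ (∑' j : ℕ, (a (j + n) : ℝ) / (b : ℝ) ^ ((j + n) + 1)) ∧
      (∑' j : ℕ, (a (j + n) : ℝ) / (b : ℝ) ^ ((j + n) + 1)) < 1 / (b:ℝ) ^ n := by
    intro n
    have hsum' : Summable (fun j => (a (j + n) : ℝ) / (b : ℝ) ^ ((j + n) + 1)) :=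
      (summable_nat_add_iff n).mpr hsum
    refine ⟨tsum_nonneg (fun j => by positivity), ?_⟩
    rw [← dp_tail_full hb n]
    obtain ⟨k, hkn, hkne⟩ := hne n
    have hsumg : Summable (fun j : ℕ => ((b:ℝ) - 1) / (b : ℝ) ^ (n + j + 1)) := by
      have h5 := (summable_nat_add_iff
          (f := fun k => (((b:ℕ) - 1 : ℕ) : ℝ) / (b : ℝ) ^ (k + 1)) n).mpr
        (dp_summable hb (fun _ => b - 1) (fun _ => by show b - 1 < b; omega))
      apply h5.congr
      intro j
      rw [hcast1]
      ring_nf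
    refine Summable.tsum_lt_tsum (i := k - n) (fun j => ?_) ?_ hsum' hsumg
    · have h2 : (a (j+n) : ℕ) ≤ b - 1 := by have := ha (j + n); omega
      have h3 : ((a (j+n) : ℕ) : ℝ) ≤ ((b - 1 : ℕ) : ℝ) := by exact_mod_cast h2
      have h1 : (a (j + n) : ℝ) ≤ (b:ℝ) - 1 := by rw [hcast1] at h3; exact h3
      have hp : (0:ℝ) < (b:ℝ) ^ (n + j + 1) := by positivity
      have he : j + n + 1 = n + j + 1 := by omega
      rw [he]
      exact (div_le_div_iff_of_pos_right hp).mpr h1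
    · have h2 : a k ≤ b - 2 := by have := ha k; omega
      have h3 : ((a k : ℕ) : ℝ) ≤ ((b - 2 : ℕ) : ℝ) := by exact_mod_cast h2
      have hcast2 : ((b - 2 : ℕ) : ℝ) = (b:ℝ) - 2 := by
        have h4 : (2:ℕ) ≤ b := hb
        push_cast [h4]; ring
      have h1 : (a (k - n + n) : ℝ) < (b:ℝ) - 1 := by
        have hkk : k - n + n = k := by omega
        rw [hkk]
        rw [hcast2] at h3
        linarith
      have hp : (0:ℝ) < (b:ℝ) ^ (n + (k - n) + 1) := by positivity
      have he : (k - n) + n + 1 = n + (k - n) + 1 := by omega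
      rw [he]
      exact (div_lt_div_iff_of_pos_right hp).mpr h1
  -- partial sums are nat multiples of b^(-n)
  have hfloor : ∀ n : ℕ, ⌊(baseVal b a) * (b:ℝ) ^ n⌋₊
      = ∑ k ∈ Finset.range n, a k * b ^ (n - 1 - k) := by
    intro n
    have hsplit := Summable.sum_add_tsum_nat_add (f := fun k => (a k : ℝ) / (b : ℝ) ^ (k + 1)) n hsum
    have hps := dp_sum_shift hb a n
    have hpow : (0:ℝ) < (b:ℝ) ^ n := by positivity
    obtain ⟨ht0, ht1⟩ := htail n
    set t := ∑' j : ℕ, (a (j + n) : ℝ) / (b : ℝ) ^ ((j + n) + 1) with htdef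
    set mn := ∑ k ∈ Finset.range n, a k * b ^ (n - 1 - k) with hmndef
    have hx : baseVal b a = (mn : ℝ) / (b:ℝ) ^ n + t := by
      rw [baseVal, ← hsplit, hps]
    rw [hx]
    have h1 : ((mn : ℝ) / (b:ℝ) ^ n + t) * (b:ℝ) ^ n = (mn : ℝ) + t * (b:ℝ) ^ n := by
      field_simp
    rw [h1]
    have h2 : 0 ≤ t * (b:ℝ) ^ n := mul_nonneg ht0 hpow.le
    have h3 : t * (b:ℝ) ^ n < 1 := by
      have := (mul_lt_mul_of_pos_right ht1 hpow)
      rw [one_div, inv_mul_cancel₀ (ne_of_gt hpow)] at this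
      exact this
    rw [Nat.floor_eq_iff (by linarith)]
    constructor
    · linarith
    · push_cast; linarith
  have hx0 : 0 ≤ baseVal b a := tsum_nonneg (fun k => by positivity)
  have hx1 : baseVal b a < 1 := by
    have h0 := htail 0
    have hsplit := Summable.sum_add_tsum_nat_add (f := fun k => (a k : ℝ) / (b : ℝ) ^ (k + 1)) 0 hsum
    simp only [Finset.range_zero, Finset.sum_empty, zero_add] at hsplit
    rw [baseVal, ← hsplit]
    simpa using h0.2
  refine ⟨hx0, hx1, fun k => ?_⟩
  rw [dp_canonDigit_eq hb hx0, hfloor (k+1)]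
  have hlast : ∑ j ∈ Finset.range (k+1), a j * b ^ (k + 1 - 1 - j)
      = b * (∑ j ∈ Finset.range k, a j * b ^ (k - 1 - j)) + a k := by
    rw [Finset.sum_range_succ]
    have h1 : k + 1 - 1 - k = 0 := by omega
    rw [h1, pow_zero, mul_one, Finset.mul_sum]
    congr 1
    refine Finset.sum_congr rfl fun j hj => ?_
    have hj' : j < k := Finset.mem_range.mp hj
    have h2 : k + 1 - 1 - j = (k - 1 - j) + 1 := by omega
    rw [h2, pow_succ]
    ring
  rw [hlast, Nat.mul_add_mod, Nat.mod_eq_of_lt (ha k)]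

/-- Along any bijection, the canonical digits of `x` are not eventually `b-1`. -/
lemma dp_exists_ne {b : ℕ} (hb : 2 ≤ b) (ψ : ℕ ≃ ℕ) {x : ℝ} (hx : 0 ≤ x) (hx1 : x < 1)
    (M : ℕ) : ∃ k, M ≤ k ∧ canonDigit b x (ψ k) ≠ b - 1 := by
  by_contra hcon
  push_neg at hcon
  set K := 1 + (Finset.range M).sup (fun i => ψ i) with hK
  refine dp_not_ev hb hx hx1 K (fun j hj => ?_)
  have h1 : M ≤ ψ.symm j := by
    by_contra h2
    push_neg at h2
    have h3 : ψ (ψ.symm j) ≤ (Finset.range M).sup (fun i => ψ i) :=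
      Finset.le_sup (f := fun i => ψ i) (Finset.mem_range.mpr h2)
    rw [Equiv.apply_symm_apply] at h3
    omega
  have := hcon (ψ.symm j) h1
  rwa [Equiv.apply_symm_apply] at this

/-- Properties of the digit–permutation map. -/
lemma dp_digitPerm_spec {b : ℕ} (hb : 2 ≤ b) (φ : ℕ ≃ ℕ) {x : ℝ} (hx : 0 ≤ x) (hx1 : x < 1) :
    0 ≤ digitPerm b φ x ∧ digitPerm b φ x < 1 ∧
      ∀ k, canonDigit b (digitPerm b φ x) k = canonDigit b x (φ.symm k) := by
  have := dp_canon_baseVal hb (fun k => canonDigit b x (φ.symm k))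
    (fun k => dp_canonDigit_lt hb hx _)
    (fun M => dp_exists_ne hb φ.symm hx hx1 M)
  exact this

/-- Membership in a base-b interval is a floor condition. -/
lemma dp_mem_Ico_iff {b : ℕ} (hb : 2 ≤ b) {x : ℝ} (hx : 0 ≤ x) (q m' : ℕ) :
    x ∈ Set.Ico ((m' : ℝ) / (b : ℝ) ^ q) (((m' : ℝ) + 1) / (b : ℝ) ^ q)
      ↔ ⌊x * (b:ℝ) ^ q⌋₊ = m' := by
  have hpow : (0:ℝ) < (b:ℝ) ^ q := by positivity
  rw [Set.mem_Ico, Nat.floor_eq_iff (by positivity)]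
  constructor
  · rintro ⟨h1, h2⟩
    constructor
    · rwa [div_le_iff₀ hpow] at h1
    · rw [lt_div_iff₀ hpow] at h2; push_cast; linarith
  · rintro ⟨h1, h2⟩
    constructor
    · rwa [div_le_iff₀ hpow]
    · rw [lt_div_iff₀ hpow]; push_cast at h2; linarith

lemma dp_digit_of_floor {b : ℕ} (hb : 2 ≤ b) {x : ℝ} (hx : 0 ≤ x) {q m' : ℕ}
    (hq : ⌊x * (b:ℝ) ^ q⌋₊ = m') {j : ℕ} (hj : j < q) :
    canonDigit b x j = m' / b ^ (q - 1 - j) % b := by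
  rw [dp_canonDigit_eq hb hx, dp_floor_div hb hx (n := q) (j := j + 1) (by omega), hq]
  have : q - (j + 1) = q - 1 - j := by omega
  rw [this]

lemma dp_floor_of_digits {b : ℕ} (hb : 2 ≤ b) {x : ℝ} (hx : 0 ≤ x) (hx1 : x < 1) (q : ℕ) :
    ⌊x * (b:ℝ) ^ q⌋₊ = ∑ k ∈ Finset.range q, canonDigit b x k * b ^ (q - 1 - k) := by
  have hps := dp_partial hb hx hx1 q
  rw [dp_sum_shift hb _ q] at hps
  have hpow : (0:ℝ) < (b:ℝ) ^ q := by positivity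
  rw [div_eq_div_iff (ne_of_gt hpow) (ne_of_gt hpow), mul_left_inj' (ne_of_gt hpow)] at hps
  exact_mod_cast hps.symm

open Classical in
set_option maxHeartbeats 1000000 in
lemma dp_card {b : ℕ} (hb : 2 ≤ b) (φ : ℕ ≃ ℕ) (p m N : ℕ)
    (hφlt : ∀ k, k < p → φ k < N) (hpN : p ≤ N) :
    ((Finset.range (b ^ N)).filter
      (fun m' => ∀ k ∈ Finset.range p,
        m' / b ^ (N - 1 - φ k) % b = m / b ^ (p - 1 - k) % b)).card
      = b ^ (N - p) := by
  have hb0 : 0 < b := by omega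
  set S := (Finset.range (b ^ N)).filter
      (fun m' => ∀ k ∈ Finset.range p,
        m' / b ^ (N - 1 - φ k) % b = m / b ^ (p - 1 - k) % b) with hSdef
  set pred : (Fin N → Fin b) → Prop := fun g =>
    ∀ j : Fin N, φ.symm (j : ℕ) < p → (g j : ℕ) = m / b ^ (p - 1 - φ.symm (j : ℕ)) % b
    with hpreddef
  set t : Finset (Fin N → Fin b) := Finset.univ.filter pred with htdef
  -- helper: digits of a function
  set eg : (Fin N → Fin b) → ℕ → ℕ :=
    fun g j => if h : j < N then (g ⟨j, h⟩ : ℕ) else 0 with hegdef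
  have heg : ∀ g j, eg g j < b := by
    intro g j
    rw [hegdef]
    by_cases h : j < N
    · simp only [dif_pos h]; exact (g ⟨j, h⟩).2
    · simp only [dif_neg h]; omega
  have hval : ∀ g, (∑ jj ∈ Finset.range N, eg g jj * b ^ (N - 1 - jj)) < b ^ N := by
    intro g
    rw [dp_reflect]
    exact dp_sum_lt (by omega) _ (fun i => heg g _) N
  have hdig : ∀ g, ∀ j0, j0 < N →
      (∑ jj ∈ Finset.range N, eg g jj * b ^ (N - 1 - jj)) / b ^ (N - 1 - j0) % b = eg g j0 := by
    intro g j0 hj0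
    rw [dp_reflect]
    have h1 := dp_digit_sum (by omega : 1 ≤ b) (fun i => eg g (N - 1 - i))
      (fun i => heg g _) (show N - 1 - j0 < N by omega)
    have h2 : N - 1 - (N - 1 - j0) = j0 := by omega
    rw [h1]
    rw [h2]
  have hrec : ∀ m' : ℕ, m' < b ^ N →
      ∑ jj ∈ Finset.range N, (m' / b ^ (N - 1 - jj) % b) * b ^ (N - 1 - jj) = m' := by
    intro m' hm'
    rw [dp_reflect]
    have h1 : ∀ i ∈ Finset.range N,
        (m' / b ^ (N - 1 - (N - 1 - i)) % b) * b ^ i = (m' / b ^ i % b) * b ^ i := by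
      intro i hi
      have hi' : i < N := Finset.mem_range.mp hi
      have h2 : N - 1 - (N - 1 - i) = i := by omega
      rw [h2]
    rw [Finset.sum_congr rfl h1, dp_digits_reconstruct, Nat.mod_eq_of_lt hm']
  have hcardst : S.card = t.card := by
    refine Finset.card_bij'
      (fun m' _ => (fun j : Fin N => (⟨m' / b ^ (N - 1 - (j : ℕ)) % b, Nat.mod_lt _ hb0⟩ : Fin b)))
      (fun g _ => ∑ jj ∈ Finset.range N, eg g jj * b ^ (N - 1 - jj)) ?_ ?_ ?_ ?_
    · -- maps into t
      intro m' hm'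
      rw [hSdef, Finset.mem_filter, Finset.mem_range] at hm'
      rw [htdef, Finset.mem_filter]
      refine ⟨Finset.mem_univ _, fun j hj => ?_⟩
      have h3 := hm'.2 (φ.symm (j : ℕ)) (Finset.mem_range.mpr hj)
      rw [Equiv.apply_symm_apply] at h3
      simpa using h3
    · -- maps into S
      intro g hg
      rw [htdef, Finset.mem_filter] at hg
      rw [hSdef, Finset.mem_filter, Finset.mem_range]
      refine ⟨hval g, fun k hk => ?_⟩
      have hkp := Finset.mem_range.mp hk
      rw [hdig g (φ k) (hφlt k hkp)]
      have h4 : eg g (φ k) = (g ⟨φ k, hφlt k hkp⟩ : ℕ) := by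
        rw [hegdef]; simp only [dif_pos (hφlt k hkp)]
      rw [h4]
      have h5 := hg.2 ⟨φ k, hφlt k hkp⟩ (by simpa using hkp)
      simpa using h5
    · -- left inverse
      intro m' hm'
      rw [hSdef, Finset.mem_filter, Finset.mem_range] at hm'
      have h6 : ∀ jj ∈ Finset.range N,
          eg (fun j : Fin N => (⟨m' / b ^ (N - 1 - (j : ℕ)) % b, Nat.mod_lt _ hb0⟩ : Fin b)) jj
            * b ^ (N - 1 - jj)
          = (m' / b ^ (N - 1 - jj) % b) * b ^ (N - 1 - jj) := by
        intro jj hjj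
        have hjj' : jj < N := Finset.mem_range.mp hjj
        rw [hegdef]
        simp only [dif_pos hjj']
      rw [Finset.sum_congr rfl h6, hrec m' hm'.1]
    · -- right inverse
      intro g hg
      funext j
      apply Fin.ext
      have h7 := hdig g (j : ℕ) j.2
      dsimp only
      rw [h7]
      rw [hegdef]
      simp only [dif_pos j.2]
  rw [hcardst]
  have hfin : t.card = Fintype.card {g : Fin N → Fin b // pred g} :=
    (Fintype.card_subtype pred).symm
  rw [hfin]
  -- the equivalence with functions on the free positions
  have E1 : {g : Fin N → Fin b // pred g}
      ≃ ({j : Fin N // ¬ (φ.symm (j : ℕ) < p)} → Fin b) :=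
    { toFun := fun G j => G.1 j.1
      invFun := fun h => ⟨fun j => if hc : φ.symm (j : ℕ) < p then
          (⟨m / b ^ (p - 1 - φ.symm (j : ℕ)) % b, Nat.mod_lt _ hb0⟩ : Fin b)
        else h ⟨j, hc⟩, fun j hj => by simp only [dif_pos hj]⟩
      left_inv := fun G => Subtype.ext (funext fun j => by
        by_cases hc : φ.symm (j : ℕ) < p
        · simp only [dif_pos hc]
          exact Fin.ext (G.2 j hc).symm
        · simp only [dif_neg hc])
      right_inv := fun h => funext fun j => by simp only [dif_neg j.2] }
  rw [Fintype.card_congr E1, Fintype.card_fun]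
  have E2 : {j : Fin N // φ.symm (j : ℕ) < p} ≃ Fin p :=
    { toFun := fun J => ⟨φ.symm (J.1 : ℕ), J.2⟩
      invFun := fun k => ⟨⟨φ (k : ℕ), hφlt _ k.2⟩, by simp⟩
      left_inv := fun J => Subtype.ext (Fin.ext (by simp))
      right_inv := fun k => Fin.ext (by simp) }
  have h8 : Fintype.card {j : Fin N // ¬ (φ.symm (j : ℕ) < p)} = N - p := by
    rw [Fintype.card_subtype_compl, Fintype.card_fin, Fintype.card_congr E2, Fintype.card_fin]
  rw [h8, Fintype.card_fin]

set_option maxHeartbeats 1000000 in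
/-- Let `b ≥ 2` be an integer, `φ : ℕ → ℕ` a bijection, and
`I = [m·b⁻ᵖ, (m+1)·b⁻ᵖ)` a base-`b` interval of generation `p ≥ 1` (so `0 ≤ m < bᵖ`).
Set `N = 1 + max {φ(k) : 0 ≤ k < p}`. Then the image `T^b_φ(I)` coincides, up to a
Lebesgue-null set, with a union of `b^(N−p)` pairwise disjoint base-`b` intervals of
generation `N`; in particular `λ(T^b_φ(I)) = b⁻ᵖ = λ(I)`. -/
theorem digitPerm_image_base_interval (b : ℕ) (hb : 2 ≤ b) (φ : ℕ ≃ ℕ)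
    (p m : ℕ) (hp : 1 ≤ p) (hm : m < b ^ p)
    (N : ℕ) (hN : N = 1 + (Finset.range p).sup (fun k => φ k))
    (I : Set ℝ) (hI : I = Set.Ico ((m : ℝ) / (b : ℝ) ^ p) (((m : ℝ) + 1) / (b : ℝ) ^ p)) :
    ∃ S : Finset ℕ,
      S.card = b ^ (N - p) ∧
      (∀ m' ∈ S, m' < b ^ N) ∧
      ((S : Set ℕ).Pairwise fun m₁ m₂ =>
        Disjoint (Set.Ico ((m₁ : ℝ) / (b : ℝ) ^ N) (((m₁ : ℝ) + 1) / (b : ℝ) ^ N))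
          (Set.Ico ((m₂ : ℝ) / (b : ℝ) ^ N) (((m₂ : ℝ) + 1) / (b : ℝ) ^ N))) ∧
      volume
        (((digitPerm b φ '' I) \
            (⋃ m' ∈ S, Set.Ico ((m' : ℝ) / (b : ℝ) ^ N) (((m' : ℝ) + 1) / (b : ℝ) ^ N))) ∪
          ((⋃ m' ∈ S, Set.Ico ((m' : ℝ) / (b : ℝ) ^ N) (((m' : ℝ) + 1) / (b : ℝ) ^ N)) \
            (digitPerm b φ '' I))) = 0 ∧
      volume (digitPerm b φ '' I) = ENNReal.ofReal (1 / (b : ℝ) ^ p) ∧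
      volume I = ENNReal.ofReal (1 / (b : ℝ) ^ p) := by
  classical
  have hb0 : 0 < b := by omega
  have hbR : (1:ℝ) < (b:ℝ) := dp_one_lt hb
  have hpowN : (0:ℝ) < (b:ℝ) ^ N := by positivity
  have hpowp : (0:ℝ) < (b:ℝ) ^ p := by positivity
  have hφlt : ∀ k, k < p → φ k < N := by
    intro k hk
    have h1 : φ k ≤ (Finset.range p).sup (fun k => φ k) :=
      Finset.le_sup (f := fun k => φ k) (Finset.mem_range.mpr hk)
    omega
  have hpN : p ≤ N := by
    have hcard : ((Finset.range p).image φ).card = p := by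
      rw [Finset.card_image_of_injective _ φ.injective, Finset.card_range]
    have hsub : (Finset.range p).image φ ⊆ Finset.range N := by
      intro j hj
      obtain ⟨k, hk, rfl⟩ := Finset.mem_image.mp hj
      exact Finset.mem_range.mpr (hφlt _ (Finset.mem_range.mp hk))
    have h2 := Finset.card_le_card hsub
    rw [hcard, Finset.card_range] at h2
    exact h2
  set S : Finset ℕ := (Finset.range (b ^ N)).filter
      (fun m' => ∀ k ∈ Finset.range p,
        m' / b ^ (N - 1 - φ k) % b = m / b ^ (p - 1 - k) % b) with hSdef
  have hIsub : ∀ x ∈ I, 0 ≤ x ∧ x < 1 := by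
    intro x hx
    rw [hI, Set.mem_Ico] at hx
    constructor
    · have h1 : (0:ℝ) ≤ (m:ℝ)/(b:ℝ)^p := by positivity
      linarith [hx.1]
    · have h2 : ((m:ℝ)+1)/(b:ℝ)^p ≤ 1 := by
        rw [div_le_one hpowp]
        have h3 : ((m+1 : ℕ) : ℝ) ≤ ((b^p : ℕ) : ℝ) := by exact_mod_cast hm
        push_cast at h3
        linarith
      linarith [hx.2]
  -- the exact description of the image
  have key : digitPerm b φ '' I
      = ⋃ m' ∈ S, Set.Ico ((m' : ℝ) / (b : ℝ) ^ N) (((m' : ℝ) + 1) / (b : ℝ) ^ N) := by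
    ext y
    simp only [Set.mem_image, Set.mem_iUnion, exists_prop]
    constructor
    · rintro ⟨x, hxI, rfl⟩
      obtain ⟨hx0, hx1⟩ := hIsub x hxI
      have hxf : ⌊x * (b:ℝ)^p⌋₊ = m := by
        rw [← dp_mem_Ico_iff hb hx0]
        rw [hI] at hxI
        exact hxI
      obtain ⟨hy0, hy1, hdig⟩ := dp_digitPerm_spec hb φ hx0 hx1
      refine ⟨⌊(digitPerm b φ x) * (b:ℝ)^N⌋₊, ?_, ?_⟩
      · rw [hSdef, Finset.mem_filter, Finset.mem_range]
        constructor
        · apply (Nat.floor_lt (by positivity)).mpr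
          push_cast
          nlinarith
        · intro k hk
          have hkp := Finset.mem_range.mp hk
          have h3 : canonDigit b (digitPerm b φ x) (φ k)
              = ⌊(digitPerm b φ x)*(b:ℝ)^N⌋₊ / b^(N-1-φ k) % b :=
            dp_digit_of_floor hb hy0 rfl (hφlt k hkp)
          have h4 : canonDigit b x k = m / b^(p-1-k) % b :=
            dp_digit_of_floor hb hx0 hxf hkp
          have h5 := hdig (φ k)
          rw [Equiv.symm_apply_apply] at h5
          rw [← h3, h5, h4]
      · exact (dp_mem_Ico_iff hb hy0 N _).mpr rfl
    · rintro ⟨m', hm'S, hymem⟩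
      rw [hSdef, Finset.mem_filter, Finset.mem_range] at hm'S
      obtain ⟨hm'lt, hm'dig⟩ := hm'S
      rw [Set.mem_Ico] at hymem
      have hy0 : 0 ≤ y := le_trans (by positivity) hymem.1
      have hy1 : y < 1 := by
        apply lt_of_lt_of_le hymem.2
        rw [div_le_one hpowN]
        have h3 : ((m'+1 : ℕ) : ℝ) ≤ ((b^N : ℕ) : ℝ) := by exact_mod_cast hm'lt
        push_cast at h3
        linarith
      have hyf : ⌊y * (b:ℝ)^N⌋₊ = m' :=
        (dp_mem_Ico_iff hb hy0 N m').mp (Set.mem_Ico.mpr hymem)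
      obtain ⟨hx0, hx1, hxdig⟩ := dp_canon_baseVal hb (fun k => canonDigit b y (φ k))
        (fun k => dp_canonDigit_lt hb hy0 _) (fun M => dp_exists_ne hb φ hy0 hy1 M)
      refine ⟨baseVal b (fun k => canonDigit b y (φ k)), ?_, ?_⟩
      · rw [hI]
        rw [show Set.Ico ((m : ℝ) / (b : ℝ) ^ p) (((m : ℝ) + 1) / (b : ℝ) ^ p)
            = Set.Ico (((m:ℕ) : ℝ) / (b : ℝ) ^ p) ((((m:ℕ) : ℝ) + 1) / (b : ℝ) ^ p) from rfl]
        rw [dp_mem_Ico_iff hb hx0 p m]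
        rw [dp_floor_of_digits hb hx0 hx1 p]
        have hsum : ∀ k ∈ Finset.range p,
            canonDigit b (baseVal b (fun k => canonDigit b y (φ k))) k * b^(p-1-k)
              = (m / b^(p-1-k) % b) * b^(p-1-k) := by
          intro k hk
          have hkp := Finset.mem_range.mp hk
          have h7 : canonDigit b y (φ k) = m' / b^(N-1-φ k) % b :=
            dp_digit_of_floor hb hy0 hyf (hφlt k hkp)
          rw [hxdig k, h7, hm'dig k hk]
        rw [Finset.sum_congr rfl hsum, dp_reflect]
        have h8 : ∀ i ∈ Finset.range p,
            (m / b^(p-1-(p-1-i)) % b) * b^i = (m / b^i % b) * b^i := by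
          intro i hi
          have hi' : i < p := Finset.mem_range.mp hi
          have h9 : p - 1 - (p - 1 - i) = i := by omega
          rw [h9]
        rw [Finset.sum_congr rfl h8, dp_digits_reconstruct, Nat.mod_eq_of_lt hm]
      · rw [digitPerm]
        have h10 : (fun k => canonDigit b (baseVal b (fun k => canonDigit b y (φ k))) (φ.symm k))
            = canonDigit b y := by
          funext k
          rw [hxdig (φ.symm k), Equiv.apply_symm_apply]
        rw [h10]
        exact dp_baseVal_canon hb hy0 hy1
  -- disjointness
  have hdisj : (S : Set ℕ).Pairwise fun m₁ m₂ =>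
      Disjoint (Set.Ico ((m₁ : ℝ) / (b : ℝ) ^ N) (((m₁ : ℝ) + 1) / (b : ℝ) ^ N))
        (Set.Ico ((m₂ : ℝ) / (b : ℝ) ^ N) (((m₂ : ℝ) + 1) / (b : ℝ) ^ N)) := by
    intro m₁ h₁ m₂ h₂ hne12
    rw [Set.disjoint_left]
    intro y hy1 hy2
    rw [Set.mem_Ico] at hy1 hy2
    have hy0 : 0 ≤ y := le_trans (by positivity) hy1.1
    have e1 := (dp_mem_Ico_iff hb hy0 N m₁).mp (Set.mem_Ico.mpr hy1)
    have e2 := (dp_mem_Ico_iff hb hy0 N m₂).mp (Set.mem_Ico.mpr hy2)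
    exact hne12 (by omega)
  have hcard : S.card = b ^ (N - p) := dp_card hb φ p m N hφlt hpN
  have hmem : ∀ m' ∈ S, m' < b ^ N := by
    intro m' hm'
    rw [hSdef, Finset.mem_filter, Finset.mem_range] at hm'
    exact hm'.1
  -- volume of the union
  have hvolU : volume (⋃ m' ∈ S,
      Set.Ico ((m' : ℝ) / (b : ℝ) ^ N) (((m' : ℝ) + 1) / (b : ℝ) ^ N))
      = ENNReal.ofReal (1 / (b : ℝ) ^ p) := by
    rw [measure_biUnion_finset hdisj (fun _ _ => measurableSet_Ico)]
    have hone : ∀ m' ∈ S, volume (Set.Ico ((m' : ℝ) / (b : ℝ) ^ N) (((m' : ℝ) + 1) / (b : ℝ) ^ N))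
        = ENNReal.ofReal (1 / (b:ℝ) ^ N) := by
      intro m' _
      rw [Real.volume_Ico]
      congr 1
      rw [div_sub_div_same]
      ring_nf
    rw [Finset.sum_congr rfl hone, Finset.sum_const, hcard, nsmul_eq_mul]
    have hc1 : ((b ^ (N - p) : ℕ) : ENNReal) = ENNReal.ofReal ((b:ℝ) ^ (N - p)) := by
      rw [← ENNReal.ofReal_natCast]
      congr 1
      push_cast
      ring
    rw [hc1, ← ENNReal.ofReal_mul (by positivity)]
    congr 1
    have hNp : N = (N - p) + p := by omega
    rw [hNp, pow_add, Nat.add_sub_cancel]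
    have h1 : (b:ℝ) ^ (N - p) ≠ 0 := by positivity
    have h2 : (b:ℝ) ^ p ≠ 0 := by positivity
    field_simp
  refine ⟨S, hcard, hmem, hdisj, ?_, ?_, ?_⟩
  · rw [key]
    simp [Set.diff_self]
  · rw [key, hvolU]
  · rw [hI, Real.volume_Ico]
    congr 1
    rw [div_sub_div_same]
    ring_nf
end

section
/- Let b ≥ 2 and k ≥ 1 be integers and ψ : ℕ × {0,…,k−1} → ℕ a bijection. Define M_ψ : [0,1)^k → [0,1) as follows: given (x_0,…,x_{k−1}) with canonical base-b expansions a_0,…,a_{k−1}, let c be the digit sequence determined by c(ψ(m,j)) = a_j(m) for all m ∈ ℕ and 0 ≤ j ≤ k−1, and let M_ψ(x_0,…,x_{k−1}) be the real represented by c. Then c is never eventually b−1 (so M_ψ is well defined with values in [0,1) and is injective), and M_ψ pushes the product of k copies of λ restricted to [0,1) forward to λ restricted to [0,1). -/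
open MeasureTheory

/-- The digit sequence `c` obtained by interleaving, along the bijection
`ψ : ℕ × {0,…,k−1} ≃ ℕ`, the canonical base-`b` expansions of `x_0, …, x_{k-1}`:
it is determined by `c(ψ(m,j)) = a_j(m)`. -/
noncomputable def mergedDigits (b k : ℕ) (ψ : ℕ × Fin k ≃ ℕ) (x : Fin k → ℝ) : ℕ → ℕ :=
  fun n => canonDigit b (x (ψ.symm n).2) (ψ.symm n).1

/-- The merge map `M_ψ : [0,1)^k → [0,1)` sending `(x_0,…,x_{k−1})` to the real number
represented by the interleaved digit sequence `c`. -/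
noncomputable def mergeMap (b k : ℕ) (ψ : ℕ × Fin k ≃ ℕ) (x : Fin k → ℝ) : ℝ :=
  baseVal b (mergedDigits b k ψ x)

section Digits
variable {b : ℕ} (hb : 2 ≤ b)
include hb

lemma bpos : (0:ℝ) < (b:ℝ) := by
  have : (0:ℕ) < b := by omega
  exact_mod_cast this

lemma bpow_pos (n : ℕ) : (0:ℝ) < (b:ℝ)^n := pow_pos (bpos hb) n

lemma canonDigit_lt (x : ℝ) (m : ℕ) : canonDigit b x m < b := by
  have hb0 : (0:ℤ) < (b:ℤ) := by exact_mod_cast (by omega : 0 < b)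
  have := Int.emod_lt_of_pos (⌊x * (b : ℝ) ^ (m + 1)⌋) hb0
  have h2 := Int.emod_nonneg (⌊x * (b : ℝ) ^ (m + 1)⌋) (by omega : (b:ℤ) ≠ 0)
  unfold canonDigit
  omega

omit hb in
lemma floor_div_nat (x : ℝ) (n : ℕ) (hn : 0 < n) : ⌊x / (n:ℝ)⌋ = ⌊x⌋ / (n:ℤ) := by
  have hn' : (0:ℝ) < (n:ℝ) := by exact_mod_cast hn
  have hnz : (0:ℤ) < (n:ℤ) := by exact_mod_cast hn
  refine le_antisymm ?_ ?_
  · rw [Int.le_ediv_iff_mul_le hnz, Int.le_floor]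
    calc ((⌊x / (n:ℝ)⌋ * (n:ℤ) : ℤ) : ℝ) = ⌊x / (n:ℝ)⌋ * (n:ℝ) := by push_cast; ring
    _ ≤ (x / (n:ℝ)) * n := by
        apply mul_le_mul_of_nonneg_right (Int.floor_le _) (le_of_lt hn')
    _ = x := by field_simp
  · rw [Int.le_floor]
    rw [le_div_iff₀ hn']
    calc ((⌊x⌋ / (n:ℤ) : ℤ) : ℝ) * n = ((⌊x⌋ / (n:ℤ) * (n:ℤ) : ℤ) : ℝ) := by push_cast; ring
    _ ≤ ((⌊x⌋ : ℤ) : ℝ) := by exact_mod_cast Int.ediv_mul_le ⌊x⌋ (by omega)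
    _ ≤ x := Int.floor_le x

lemma floor_rec (x : ℝ) (m : ℕ) :
    ⌊x * (b:ℝ)^(m+1)⌋ = (b:ℤ) * ⌊x * (b:ℝ)^m⌋ + (canonDigit b x m : ℤ) := by
  have hbR : (0:ℝ) < (b:ℝ) := bpos hb
  have hdiv : ⌊x * (b:ℝ)^(m+1)⌋ / (b:ℤ) = ⌊x * (b:ℝ)^m⌋ := by
    have := floor_div_nat (x * (b:ℝ)^(m+1)) b (by omega)
    rw [show x * (b:ℝ)^(m+1) / (b:ℝ) = x * (b:ℝ)^m by
      field_simp; ring] at this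
    exact this.symm
  have hmod : (canonDigit b x m : ℤ) = ⌊x * (b:ℝ)^(m+1)⌋ % (b:ℤ) := by
    unfold canonDigit
    rw [Int.toNat_of_nonneg (Int.emod_nonneg _ (by omega : (b:ℤ) ≠ 0))]
  rw [hmod, ← hdiv]
  exact (Int.mul_ediv_add_emod _ _).symm

end Digits


def digVal (b : ℕ) (a : ℕ → ℕ) : ℕ → ℕ
  | 0 => 0
  | n + 1 => b * digVal b a n + a n

section DV
variable {b : ℕ} (hb : 2 ≤ b)

lemma digVal_congr {a d : ℕ → ℕ} {n : ℕ} (h : ∀ m < n, a m = d m) :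
    digVal b a n = digVal b d n := by
  induction n with
  | zero => rfl
  | succ n ih =>
    simp only [digVal, ih (fun m hm => h m (by omega)), h n (by omega)]

lemma digVal_lt {a : ℕ → ℕ} : ∀ {n : ℕ}, (∀ m < n, a m < b) →
    digVal b a n < b ^ n := by
  intro n
  induction n with
  | zero => intro _; simp [digVal]
  | succ n ih =>
    intro ha
    have ihh := ih (fun m hm => ha m (by omega))
    show b * digVal b a n + a n < b ^ (n+1)
    calc b * digVal b a n + a n < b * digVal b a n + b := by
          have := ha n (by omega); omega
    _ = b * (digVal b a n + 1) := by ring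
    _ ≤ b * b ^ n := Nat.mul_le_mul_left b (by omega)
    _ = b ^ (n+1) := by ring

lemma digVal_inj {a d : ℕ → ℕ} : ∀ {n : ℕ}, (∀ m < n, a m < b) → (∀ m < n, d m < b) →
    digVal b a n = digVal b d n → ∀ m < n, a m = d m := by
  intro n
  induction n with
  | zero => intro _ _ _; omega
  | succ n ih =>
    intro ha hd h
    simp only [digVal] at h
    have h1 : a n = d n ∧ digVal b a n = digVal b d n := by
      have han := ha n (by omega); have hdn := hd n (by omega)
      constructor
      · have : (b * digVal b a n + a n) % b = (b * digVal b d n + d n) % b := by rw [h]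
        simpa [Nat.add_mul_mod_self_left, Nat.mod_eq_of_lt han, Nat.mod_eq_of_lt hdn,
          Nat.mul_add_mod] using this
      · have : (b * digVal b a n + a n) / b = (b * digVal b d n + d n) / b := by rw [h]
        simpa [Nat.mul_add_div (by omega : 0 < b), Nat.div_eq_of_lt han,
          Nat.div_eq_of_lt hdn] using this
    intro m hm
    rcases Nat.lt_succ_iff_lt_or_eq.mp hm with hm' | rfl
    · exact ih (fun m hm => ha m (by omega)) (fun m hm => hd m (by omega)) h1.2 m hm'
    · exact h1.1

-- partial sums of digit series in terms of digVal
lemma digit_partial_sum (a : ℕ → ℕ) (n : ℕ) (hbne : (b:ℝ) ≠ 0) :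
    ∑ m ∈ Finset.range n, (a m : ℝ) / (b:ℝ)^(m+1) = (digVal b a n : ℝ) / (b:ℝ)^n := by
  induction n with
  | zero => simp [digVal]
  | succ n ih =>
    rw [Finset.sum_range_succ, ih]
    simp only [digVal]
    push_cast
    field_simp
    ring

end DV

open MeasureTheory

section Core
variable {b : ℕ} (hb : 2 ≤ b)
include hb

lemma floor_eq_digVal {x : ℝ} (hx : x ∈ Set.Ico (0:ℝ) 1) (n : ℕ) :
    ⌊x * (b:ℝ)^n⌋ = (digVal b (canonDigit b x) n : ℤ) := by
  induction n with
  | zero => simp [digVal, Int.floor_eq_zero_iff, hx.1, hx.2]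
  | succ n ih =>
    rw [floor_rec hb x n, ih]
    simp only [digVal]
    push_cast
    ring

lemma binv_lt_one : (b:ℝ)⁻¹ < 1 := by
  rw [inv_lt_one_iff₀]; right; exact_mod_cast by omega

lemma summable_geom_b : Summable (fun m : ℕ => ((b:ℝ)⁻¹)^m) :=
  summable_geometric_of_lt_one (by positivity) (binv_lt_one hb)

lemma le_geom_bound {c : ℝ} (hc0 : 0 ≤ c) (hc : c ≤ (b:ℝ)) (m : ℕ) :
    c / (b:ℝ)^(m+1) ≤ ((b:ℝ)⁻¹)^m := by
  have hbR := bpos hb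
  rw [div_le_iff₀ (bpow_pos hb (m+1))]
  calc c ≤ (b:ℝ) := hc
  _ = ((b:ℝ)⁻¹)^m * ((b:ℝ)^m * (b:ℝ)) := by
        rw [← mul_assoc, ← mul_pow, inv_mul_cancel₀ (ne_of_gt hbR), one_pow, one_mul]
  _ = ((b:ℝ)⁻¹)^m * (b:ℝ)^(m+1) := by rw [pow_succ]

lemma bsub_nonneg : (0:ℝ) ≤ (b:ℝ) - 1 := by
  have : (1:ℝ) ≤ (b:ℝ) := by exact_mod_cast by omega
  linarith

omit hb in
lemma bsub_le : (b:ℝ) - 1 ≤ (b:ℝ) := by linarith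

lemma digit_cast_le {a : ℕ → ℕ} (ha : ∀ m, a m < b) (m : ℕ) : (a m : ℝ) ≤ (b:ℝ) - 1 := by
  have h1 : a m ≤ b - 1 := by have := ha m; omega
  have hb1 : (1:ℕ) ≤ b := by omega
  calc (a m : ℝ) ≤ ((b - 1 : ℕ) : ℝ) := by exact_mod_cast h1
  _ = (b:ℝ) - 1 := by push_cast [hb1]; ring

lemma summable_digits {a : ℕ → ℕ} (ha : ∀ m, a m < b) :
    Summable (fun m => (a m : ℝ) / (b:ℝ)^(m+1)) := by
  apply Summable.of_nonneg_of_le (fun m => by positivity)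
    (fun m => le_geom_bound hb (by positivity) (le_trans (digit_cast_le hb ha m) (bsub_le)) m)
    (summable_geom_b hb)

lemma summable_topdigits :
    Summable (fun m : ℕ => ((b:ℝ) - 1) / (b:ℝ)^(m+1)) := by
  apply Summable.of_nonneg_of_le (fun m => div_nonneg (bsub_nonneg hb) (bpow_pos hb (m+1)).le)
    (fun m => le_geom_bound hb (bsub_nonneg hb) (bsub_le) m)
    (summable_geom_b hb)

lemma baseVal_eq_partial_add_tail {a : ℕ → ℕ} (ha : ∀ m, a m < b) (n : ℕ) :
    baseVal b a = (digVal b a n : ℝ) / (b:ℝ)^n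
      + baseVal b (fun m => a (m + n)) / (b:ℝ)^n := by
  have hs := summable_digits hb ha
  have h0 := (Summable.sum_add_tsum_nat_add n hs).symm
  rw [baseVal, h0, digit_partial_sum a n (ne_of_gt (bpos hb))]
  congr 1
  rw [baseVal, ← tsum_div_const]
  congr 1
  funext m
  have hbR := bpos hb
  rw [div_div, ← pow_add]
  congr 2
  omega

lemma baseVal_nonneg (a : ℕ → ℕ) : 0 ≤ baseVal b a :=
  tsum_nonneg (fun m => by positivity)

lemma tsum_topdigits : ∑' m : ℕ, ((b:ℝ) - 1) / (b:ℝ)^(m+1) = 1 := by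
  have hbR := bpos hb
  have hinv : (b:ℝ)⁻¹ < 1 := by rw [inv_lt_one_iff₀]; right; exact_mod_cast by omega
  have : ∀ m : ℕ, ((b:ℝ) - 1) / (b:ℝ)^(m+1) = (((b:ℝ)-1) * (b:ℝ)⁻¹) * ((b:ℝ)⁻¹)^m := by
    intro m; rw [pow_succ, div_eq_mul_inv, mul_inv, ← inv_pow]; ring
  rw [tsum_congr this, tsum_mul_left, tsum_geometric_of_lt_one (by positivity) hinv]
  have hbne : (b:ℝ) - 1 ≠ 0 := by
    have : (2:ℝ) ≤ (b:ℝ) := by exact_mod_cast hb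
    linarith
  have hbne' : (b:ℝ) ≠ 0 := ne_of_gt hbR
  field_simp

lemma baseVal_le_one {a : ℕ → ℕ} (ha : ∀ m, a m < b) : baseVal b a ≤ 1 := by
  rw [← tsum_topdigits hb]
  exact Summable.tsum_le_tsum
    (fun m => div_le_div_of_nonneg_right (digit_cast_le hb ha m) (bpow_pos hb (m+1)).le)
    (summable_digits hb ha) (summable_topdigits hb)

lemma baseVal_lt_one {a : ℕ → ℕ} (ha : ∀ m, a m < b)
    (hne : ∃ m, a m ≠ b - 1) : baseVal b a < 1 := by
  obtain ⟨m0, hm0⟩ := hne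
  rw [← tsum_topdigits hb]
  apply Summable.tsum_lt_tsum (i := m0)
    (fun m => div_le_div_of_nonneg_right (digit_cast_le hb ha m) (bpow_pos hb (m+1)).le)
    _ (summable_digits hb ha) (summable_topdigits hb)
  apply div_lt_div_of_pos_right _ (bpow_pos hb (m0+1))
  have h1 : a m0 < b - 1 := by have := ha m0; omega
  have h2 : a m0 + 1 ≤ b - 1 := by omega
  have hb1 : (1:ℕ) ≤ b := by omega
  calc (a m0 : ℝ) < (a m0 : ℝ) + 1 := by linarith
  _ ≤ ((b - 1 : ℕ) : ℝ) := by exact_mod_cast h2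
  _ = (b:ℝ) - 1 := by push_cast [hb1]; ring

end Core

/-- good digit sequence: all digits < b and not eventually b-1 -/
def GoodSeq (b : ℕ) (a : ℕ → ℕ) : Prop :=
  (∀ m, a m < b) ∧ (∀ N, ∃ m, N ≤ m ∧ a m ≠ b - 1)

lemma GoodSeq.shift {b : ℕ} {a : ℕ → ℕ} (h : GoodSeq b a) (n : ℕ) :
    GoodSeq b (fun m => a (m + n)) := by
  refine ⟨fun m => h.1 _, fun N => ?_⟩
  obtain ⟨m, hm, hne⟩ := h.2 (N + n)
  refine ⟨m - n, by omega, ?_⟩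
  have h' : m - n + n = m := by omega
  simp only [h']
  exact hne

section Recon
variable {b : ℕ} (hb : 2 ≤ b)
include hb

lemma baseVal_mem_Ico {a : ℕ → ℕ} (h : GoodSeq b a) :
    baseVal b a ∈ Set.Ico (0:ℝ) 1 := by
  refine ⟨baseVal_nonneg hb a, baseVal_lt_one hb h.1 ?_⟩
  obtain ⟨m, _, hne⟩ := h.2 0
  exact ⟨m, hne⟩

lemma floor_baseVal {a : ℕ → ℕ} (h : GoodSeq b a) (n : ℕ) :
    ⌊baseVal b a * (b:ℝ)^n⌋ = (digVal b a n : ℤ) := by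
  have key := baseVal_eq_partial_add_tail hb h.1 n
  have htail := baseVal_mem_Ico hb (h.shift n)
  have hbn := bpow_pos hb n
  rw [Int.floor_eq_iff]
  constructor
  · push_cast
    rw [key, add_mul, div_mul_cancel₀ _ (ne_of_gt hbn), div_mul_cancel₀ _ (ne_of_gt hbn)]
    have := htail.1
    linarith
  · push_cast
    rw [key, add_mul, div_mul_cancel₀ _ (ne_of_gt hbn), div_mul_cancel₀ _ (ne_of_gt hbn)]
    have := htail.2
    linarith

lemma canonDigit_baseVal {a : ℕ → ℕ} (h : GoodSeq b a) :
    canonDigit b (baseVal b a) = a := by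
  funext m
  have h1 := floor_baseVal hb h (m + 1)
  have h2 : (digVal b a (m+1) : ℤ) = (b:ℤ) * (digVal b a m : ℤ) + (a m : ℤ) := by
    show ((b * digVal b a m + a m : ℕ) : ℤ) = _
    push_cast; ring
  unfold canonDigit
  rw [h1, h2, add_comm, Int.add_mul_emod_self_left,
    Int.emod_eq_of_lt (Int.natCast_nonneg _) (by exact_mod_cast h.1 m)]
  simp

/-- digits of x in [0,1) form a good sequence -/
lemma goodSeq_canonDigit {x : ℝ} (hx : x ∈ Set.Ico (0:ℝ) 1) :
    GoodSeq b (canonDigit b x) := by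
  refine ⟨canonDigit_lt hb x, ?_⟩
  by_contra hcon
  push_neg at hcon
  obtain ⟨N, hN⟩ := hcon
  have hdig : ∀ m, N ≤ m → canonDigit b x m = b - 1 := fun m hm => hN m hm
  have hbR : (1:ℝ) < (b:ℝ) := by exact_mod_cast by omega
  have hpN := bpow_pos hb N
  have hdv : ∀ j : ℕ, (digVal b (canonDigit b x) (N + j) : ℝ)
      = (digVal b (canonDigit b x) N : ℝ) * (b:ℝ)^j + ((b:ℝ)^j - 1) := by
    intro j
    induction j with
    | zero => simp
    | succ j ih =>
      have hnj : N + (j+1) = (N + j) + 1 := by omega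
      rw [hnj]
      show ((b * digVal b (canonDigit b x) (N+j) + canonDigit b x (N+j) : ℕ) : ℝ) = _
      push_cast
      rw [ih, hdig (N+j) (by omega)]
      have hb1 : (1:ℕ) ≤ b := by omega
      have hc : ((b - 1 : ℕ) : ℝ) = (b:ℝ) - 1 := by push_cast [hb1]; ring
      rw [hc]
      ring
  have hfr : ∀ n : ℕ, (digVal b (canonDigit b x) n : ℝ) ≤ x * (b:ℝ)^n ∧
      x * (b:ℝ)^n < (digVal b (canonDigit b x) n : ℝ) + 1 := by
    intro n
    have h1 := floor_eq_digVal hb hx n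
    constructor
    · have h2 := Int.floor_le (x * (b:ℝ)^n); rw [h1] at h2; exact_mod_cast h2
    · have h2 := Int.lt_floor_add_one (x * (b:ℝ)^n); rw [h1] at h2; exact_mod_cast h2
  set D : ℝ := (digVal b (canonDigit b x) N : ℝ) with hD
  set r : ℝ := x - D / (b:ℝ)^N - 1 / (b:ℝ)^N with hrdef
  have hrP : r * (b:ℝ)^N = x * (b:ℝ)^N - D - 1 := by
    rw [hrdef]; field_simp
  have key : ∀ j : ℕ, (-1 : ℝ) ≤ r * (b:ℝ)^(N+j) ∧ r * (b:ℝ)^(N+j) < 0 := by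
    intro j
    have h1 := (hfr (N+j)).1
    have h2 := (hfr (N+j)).2
    rw [hdv j] at h1 h2
    have hsplit : (b:ℝ)^(N+j) = (b:ℝ)^N * (b:ℝ)^j := pow_add _ _ _
    have hrPQ : r * (b:ℝ)^(N+j) = x * (b:ℝ)^(N+j) - D * (b:ℝ)^j - (b:ℝ)^j := by
      rw [hsplit, ← mul_assoc, hrP]; ring
    rw [hrPQ, hsplit]
    rw [hsplit] at h1 h2
    constructor <;> nlinarith
  have hrneg : r < 0 := by
    have h2 := (key 0).2
    have hp := bpow_pos hb (N+0)
    by_contra hge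
    push_neg at hge
    nlinarith
  obtain ⟨j, hj⟩ := pow_unbounded_of_one_lt ((1:ℝ)/(-r)) hbR
  have hbj := bpow_pos hb j
  have hbNj := bpow_pos hb (N+j)
  have h1j : (1:ℝ)/(b:ℝ)^j < -r := by
    rw [div_lt_iff₀ hbj]
    rw [div_lt_iff₀ (by linarith : (0:ℝ) < -r)] at hj
    linarith
  have hmono : (1:ℝ)/(b:ℝ)^(N+j) ≤ 1/(b:ℝ)^j :=
    one_div_le_one_div_of_le hbj (pow_le_pow_right₀ hbR.le (by omega))
  have hrj := (key j).1
  -- r ≥ -1/b^(N+j)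
  have hfin : -(1/(b:ℝ)^(N+j)) ≤ r := by
    rw [neg_le, le_div_iff₀ hbNj]
    nlinarith [hrj]
  linarith

end Recon

section Cyl
variable {b : ℕ} (hb : 2 ≤ b)
include hb

lemma mem_badic_iff (n : ℕ) (t : ℤ) (x : ℝ) :
    x ∈ Set.Ico ((t:ℝ)/(b:ℝ)^n) (((t:ℝ)+1)/(b:ℝ)^n) ↔ ⌊x * (b:ℝ)^n⌋ = t := by
  have hp := bpow_pos hb n
  rw [Set.mem_Ico, Int.floor_eq_iff, div_le_iff₀ hp, lt_div_iff₀ hp]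

lemma prefix_cylinder (n : ℕ) (d : ℕ → ℕ) (hd : ∀ m < n, d m < b) :
    {x : ℝ | x ∈ Set.Ico (0:ℝ) 1 ∧ ∀ m < n, canonDigit b x m = d m}
      = Set.Ico ((digVal b d n : ℝ)/(b:ℝ)^n) (((digVal b d n : ℝ)+1)/(b:ℝ)^n) := by
  have hp := bpow_pos hb n
  have hT : digVal b d n < b ^ n := digVal_lt hd
  have hTb : (digVal b d n : ℝ) + 1 ≤ (b:ℝ)^n := by
    have : digVal b d n + 1 ≤ b ^ n := hT
    calc (digVal b d n : ℝ) + 1 = ((digVal b d n + 1 : ℕ) : ℝ) := by push_cast; ring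
    _ ≤ ((b^n : ℕ) : ℝ) := by exact_mod_cast this
    _ = (b:ℝ)^n := by push_cast; ring
  ext x
  constructor
  · rintro ⟨hx, hdig⟩
    refine (mem_badic_iff hb n _ x).mpr ?_
    rw [floor_eq_digVal hb hx n]
    exact_mod_cast digVal_congr (fun m hm => hdig m hm)
  · intro hx'
    have hfl : ⌊x * (b:ℝ)^n⌋ = (digVal b d n : ℤ) := (mem_badic_iff hb n _ x).mp hx'
    rw [Set.mem_Ico] at hx'
    have hx : x ∈ Set.Ico (0:ℝ) 1 := by
      constructor
      · have : (0:ℝ) ≤ (digVal b d n : ℝ)/(b:ℝ)^n := by positivity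
        linarith [hx'.1]
      · have h2 := hx'.2
        have hle1 : ((digVal b d n : ℝ)+1)/(b:ℝ)^n ≤ 1 := by
          rw [div_le_one hp]; linarith
        linarith
    refine ⟨hx, ?_⟩
    have h1 := floor_eq_digVal hb hx n
    rw [hfl] at h1
    have h2 : digVal b (canonDigit b x) n = digVal b d n := by exact_mod_cast h1.symm
    exact digVal_inj (fun m _ => canonDigit_lt hb x m) hd h2

omit hb in
lemma measurable_canonDigit (m : ℕ) : Measurable (fun x : ℝ => canonDigit b x m) :=
  (Measurable.of_discrete (f := fun z : ℤ => (z % (b:ℤ)).toNat)).comp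
    (Int.measurable_floor.comp (measurable_id.mul_const _))

omit hb in
lemma measurableSet_prefix_cylinder (n : ℕ) (d : ℕ → ℕ) :
    MeasurableSet {x : ℝ | x ∈ Set.Ico (0:ℝ) 1 ∧ ∀ m < n, canonDigit b x m = d m} := by
  have h1 : {x : ℝ | x ∈ Set.Ico (0:ℝ) 1 ∧ ∀ m < n, canonDigit b x m = d m}
      = Set.Ico (0:ℝ) 1 ∩ ⋂ m ∈ Set.Iio n, (fun x : ℝ => canonDigit b x m) ⁻¹' {d m} := by
    ext x
    simp [Set.mem_iInter]
  rw [h1]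
  exact measurableSet_Ico.inter (MeasurableSet.biInter (Set.to_countable _)
    (fun m _ => measurable_canonDigit m (measurableSet_singleton (d m))))

lemma volume_prefix_cylinder (n : ℕ) (d : ℕ → ℕ) (hd : ∀ m < n, d m < b) :
    volume {x : ℝ | x ∈ Set.Ico (0:ℝ) 1 ∧ ∀ m < n, canonDigit b x m = d m}
      = ((b : ENNReal)^n)⁻¹ := by
  rw [prefix_cylinder hb n d hd, Real.volume_Ico]
  have hp := bpow_pos hb n
  have : ((digVal b d n : ℝ)+1)/(b:ℝ)^n - (digVal b d n : ℝ)/(b:ℝ)^n = ((b:ℝ)^n)⁻¹ := by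
    field_simp
    ring
  rw [this, ← ENNReal.ofReal_natCast b, ← ENNReal.ofReal_pow (by positivity),
    ← ENNReal.ofReal_inv_of_pos hp]

end Cyl

lemma measurableSet_finset_cylinder {b : ℕ} (S : Finset ℕ) (d : ℕ → ℕ) :
    MeasurableSet {x : ℝ | x ∈ Set.Ico (0:ℝ) 1 ∧ ∀ m ∈ S, canonDigit b x m = d m} := by
  have h1 : {x : ℝ | x ∈ Set.Ico (0:ℝ) 1 ∧ ∀ m ∈ S, canonDigit b x m = d m}
      = Set.Ico (0:ℝ) 1 ∩ ⋂ m ∈ (S : Set ℕ), (fun x : ℝ => canonDigit b x m) ⁻¹' {d m} := by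
    ext x
    simp [Set.mem_iInter]
  rw [h1]
  exact measurableSet_Ico.inter (MeasurableSet.biInter (Set.to_countable _)
    (fun m _ => measurable_canonDigit m (measurableSet_singleton (d m))))

section Count
variable {b : ℕ} (hb : 2 ≤ b)
include hb

lemma card_constrained (N : ℕ) (S : Finset ℕ) (hSN : ∀ m ∈ S, m < N)
    (d : ℕ → ℕ) (hd : ∀ m ∈ S, d m < b) :
    (Finset.univ.filter
        (fun e : Fin N → Fin b => ∀ m : Fin N, (m:ℕ) ∈ S → (e m : ℕ) = d m)).card
      = b ^ (N - S.card) := by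
  rw [← Fintype.card_subtype]
  have e1 : {e : Fin N → Fin b // ∀ m : Fin N, (m:ℕ) ∈ S → (e m : ℕ) = d m}
      ≃ ∀ m : Fin N, {v : Fin b // (m:ℕ) ∈ S → (v : ℕ) = d m} :=
    Equiv.subtypePiEquivPi (p := fun (m : Fin N) (v : Fin b) => (m:ℕ) ∈ S → (v:ℕ) = d m)
  rw [Fintype.card_congr e1, Fintype.card_pi]
  have hcards : ∀ m : Fin N, Fintype.card {v : Fin b // (m:ℕ) ∈ S → (v:ℕ) = d m}
      = if (m:ℕ) ∈ S then 1 else b := by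
    intro m
    by_cases hm : (m:ℕ) ∈ S
    · rw [if_pos hm]
      have hdm := hd _ hm
      have hiff : ∀ v : Fin b, ((m:ℕ) ∈ S → (v:ℕ) = d m) ↔ v = ⟨d m, hdm⟩ := by
        intro v
        constructor
        · intro h; exact Fin.ext (h hm)
        · intro h _; rw [h]
      rw [Fintype.card_congr (Equiv.subtypeEquivRight hiff), Fintype.card_subtype_eq]
    · rw [if_neg hm]
      have hiff : ∀ v : Fin b, ((m:ℕ) ∈ S → (v:ℕ) = d m) ↔ True := by
        intro v
        simp only [iff_true]
        intro h; exact absurd h hm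
      rw [Fintype.card_congr (Equiv.subtypeEquivRight hiff),
        Fintype.card_congr (Equiv.subtypeUnivEquiv (fun v => trivial)), Fintype.card_fin]
  rw [Finset.prod_congr rfl (fun m _ => hcards m), Finset.prod_ite,
    Finset.prod_const_one, Finset.prod_const, one_mul]
  congr 1
  have hpos : (Finset.univ.filter (fun m : Fin N => (m:ℕ) ∈ S)).card = S.card := by
    apply Finset.card_bij (fun (m : Fin N) _ => (m : ℕ))
    · intro a ha
      exact (Finset.mem_filter.mp ha).2
    · intro a1 h1 a2 h2 h
      exact Fin.ext h
    · intro m hm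
      exact ⟨⟨m, hSN m hm⟩, Finset.mem_filter.mpr ⟨Finset.mem_univ _, hm⟩, rfl⟩
  have htot := Finset.card_filter_add_card_filter_not
    (s := (Finset.univ : Finset (Fin N))) (p := fun m : Fin N => (m:ℕ) ∈ S)
  rw [Finset.card_univ, Fintype.card_fin] at htot
  omega

end Count

section FinCyl
variable {b : ℕ} (hb : 2 ≤ b)
include hb

/-- extension of a Fin-indexed digit tuple to ℕ -/
def extSeq {N : ℕ} (b : ℕ) (e : Fin N → Fin b) : ℕ → ℕ :=
  fun m => if h : m < N then (e ⟨m, h⟩ : ℕ) else 0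

lemma volume_finset_cylinder (S : Finset ℕ) (d : ℕ → ℕ) (hd : ∀ m ∈ S, d m < b) :
    volume {x : ℝ | x ∈ Set.Ico (0:ℝ) 1 ∧ ∀ m ∈ S, canonDigit b x m = d m}
      = ((b : ENNReal)⁻¹) ^ S.card := by
  have hb0 : (b : ENNReal) ≠ 0 := by
    simp only [ne_eq, Nat.cast_eq_zero]; omega
  have hbt : (b : ENNReal) ≠ ⊤ := ENNReal.natCast_ne_top b
  set N := S.sup id + 1 with hN
  have hSN : ∀ m ∈ S, m < N := fun m hm =>
    lt_of_le_of_lt (Finset.le_sup (f := id) hm) (Nat.lt_succ_self _)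
  classical
  set E : Finset (Fin N → Fin b) := Finset.univ.filter
    (fun e => ∀ m : Fin N, (m:ℕ) ∈ S → (e m : ℕ) = d m) with hE
  set C : (Fin N → Fin b) → Set ℝ := fun e =>
    {x | x ∈ Set.Ico (0:ℝ) 1 ∧ ∀ m < N, canonDigit b x m = extSeq b e m} with hC
  have hset : {x : ℝ | x ∈ Set.Ico (0:ℝ) 1 ∧ ∀ m ∈ S, canonDigit b x m = d m}
      = ⋃ e ∈ E, C e := by
    ext x
    simp only [Set.mem_setOf_eq, Set.mem_iUnion, hC, hE, Finset.mem_filter,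
      Finset.mem_univ, true_and]
    constructor
    · rintro ⟨hx, hS⟩
      refine ⟨fun m => ⟨canonDigit b x (m:ℕ), canonDigit_lt hb x _⟩, ?_, hx, ?_⟩
      · intro m hm; exact hS _ hm
      · intro m hm; simp [extSeq, hm]
    · rintro ⟨e, he, hx, hCx⟩
      refine ⟨hx, fun m hm => ?_⟩
      have hmN := hSN m hm
      rw [hCx m hmN]
      have := he ⟨m, hmN⟩ hm
      simpa [extSeq, hmN] using this
  have hdisj : (E : Set (Fin N → Fin b)).PairwiseDisjoint C := by
    intro e he f hf hne
    simp only [Function.onFun, Set.disjoint_left]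
    intro x hxe hxf
    apply hne
    funext m
    apply Fin.ext
    have h1 := hxe.2 m m.isLt
    have h2 := hxf.2 m m.isLt
    rw [h1] at h2
    simpa [extSeq, m.isLt] using h2
  have hmeas : ∀ e ∈ E, MeasurableSet (C e) := fun e _ =>
    measurableSet_prefix_cylinder N (extSeq b e)
  rw [hset, measure_biUnion_finset hdisj hmeas]
  have hvol : ∀ e ∈ E, volume (C e) = ((b : ENNReal)^N)⁻¹ := by
    intro e _
    exact volume_prefix_cylinder hb N (extSeq b e)
      (fun m hm => by simp only [extSeq, dif_pos hm]; exact (e ⟨m, hm⟩).isLt)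
  rw [Finset.sum_congr rfl hvol, Finset.sum_const, card_constrained hb N S hSN d hd]
  have hsle : S.card ≤ N := by
    have h2 : S ⊆ Finset.range N := fun m hm => Finset.mem_range.mpr (hSN m hm)
    have := Finset.card_le_card h2
    simpa using this
  rw [nsmul_eq_mul]
  rw [Nat.cast_pow]
  have hsplit : (b : ENNReal)^N = (b : ENNReal)^(N - S.card) * (b : ENNReal)^(S.card) := by
    rw [← pow_add]; congr 1; omega
  rw [hsplit, ENNReal.mul_inv (Or.inl (pow_ne_zero _ hb0)) (Or.inl (ENNReal.pow_ne_top hbt)),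
    ← mul_assoc, ENNReal.mul_inv_cancel (pow_ne_zero _ hb0) (ENNReal.pow_ne_top hbt), one_mul,
    ENNReal.inv_pow]

end FinCyl

def badicIntervals (b : ℕ) : Set (Set ℝ) :=
  {s | ∃ (n : ℕ) (t : ℤ), s = Set.Ico ((t:ℝ)/(b:ℝ)^n) (((t:ℝ)+1)/(b:ℝ)^n)}

section Pi
variable {b : ℕ} (hb : 2 ≤ b)
include hb

lemma badic_floor_agree {n m : ℕ} (hnm : n ≤ m) (x y : ℝ)
    (h : ⌊x * (b:ℝ)^m⌋ = ⌊y * (b:ℝ)^m⌋) : ⌊x * (b:ℝ)^n⌋ = ⌊y * (b:ℝ)^n⌋ := by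
  have hbp := bpos hb
  have hkey : ∀ z : ℝ, ⌊z * (b:ℝ)^n⌋ = ⌊z * (b:ℝ)^m⌋ / ((b^(m-n) : ℕ) : ℤ) := by
    intro z
    have h1 : z * (b:ℝ)^n = z * (b:ℝ)^m / ((b^(m-n) : ℕ) : ℝ) := by
      have : (b:ℝ)^m = (b:ℝ)^n * (b:ℝ)^(m-n) := by
        rw [← pow_add]; congr 1; omega
      rw [this]
      push_cast
      field_simp
    rw [h1, floor_div_nat _ _ (by positivity)]
  rw [hkey x, hkey y, h]

lemma badic_subset {n m : ℕ} (hnm : n ≤ m) (t u : ℤ)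
    (hne : (Set.Ico ((t:ℝ)/(b:ℝ)^n) (((t:ℝ)+1)/(b:ℝ)^n) ∩
      Set.Ico ((u:ℝ)/(b:ℝ)^m) (((u:ℝ)+1)/(b:ℝ)^m)).Nonempty) :
    Set.Ico ((u:ℝ)/(b:ℝ)^m) (((u:ℝ)+1)/(b:ℝ)^m) ⊆
      Set.Ico ((t:ℝ)/(b:ℝ)^n) (((t:ℝ)+1)/(b:ℝ)^n) := by
  obtain ⟨x, hx1, hx2⟩ := hne
  rw [mem_badic_iff hb] at hx1 hx2
  intro y hy
  rw [mem_badic_iff hb] at hy ⊢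
  rw [← hx1]
  exact badic_floor_agree hb hnm y x (by rw [hy, hx2])

lemma isPiSystem_badic : IsPiSystem (badicIntervals b) := by
  rintro s ⟨n, t, rfl⟩ s' ⟨m, u, rfl⟩ hne
  rcases le_total n m with h | h
  · rw [Set.inter_eq_self_of_subset_right (badic_subset hb h t u hne)]
    exact ⟨m, u, rfl⟩
  · rw [Set.inter_comm] at hne ⊢
    rw [Set.inter_eq_self_of_subset_right (badic_subset hb h u t hne)]
    exact ⟨n, t, rfl⟩

lemma borel_eq_badic :
    (inferInstance : MeasurableSpace ℝ) = MeasurableSpace.generateFrom (badicIntervals b) := by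
  apply le_antisymm
  · rw [BorelSpace.measurable_eq (α := ℝ), Real.borel_eq_generateFrom_Ioo_rat]
    apply MeasurableSpace.generateFrom_le
    rintro s hs
    simp only [Set.mem_iUnion] at hs
    obtain ⟨p, q, hpq, hs⟩ := hs
    rw [Set.mem_singleton_iff] at hs
    subst hs
    classical
    have hbR : (1:ℝ) < (b:ℝ) := by exact_mod_cast by omega
    have hIoo : Set.Ioo (p:ℝ) (q:ℝ) = ⋃ (nt : ℕ × ℤ),
        (if Set.Ico ((nt.2:ℝ)/(b:ℝ)^nt.1) (((nt.2:ℝ)+1)/(b:ℝ)^nt.1) ⊆ Set.Ioo (p:ℝ) (q:ℝ)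
          then Set.Ico ((nt.2:ℝ)/(b:ℝ)^nt.1) (((nt.2:ℝ)+1)/(b:ℝ)^nt.1) else ∅) := by
      ext x
      simp only [Set.mem_iUnion]
      constructor
      · intro hx
        have hx1 := hx.1
        have hx2 := hx.2
        set ε : ℝ := min (x - p) (q - x) with hε
        have hεpos : 0 < ε := by
          apply lt_min <;> linarith
        obtain ⟨n, hn⟩ := pow_unbounded_of_one_lt ((1:ℝ)/ε) hbR
        have hbn := bpow_pos hb n
        have h1n : (1:ℝ)/(b:ℝ)^n < ε := by
          rw [div_lt_iff₀ hbn]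
          rw [div_lt_iff₀ hεpos] at hn
          linarith
        refine ⟨(n, ⌊x * (b:ℝ)^n⌋), ?_⟩
        have hsub : Set.Ico ((⌊x * (b:ℝ)^n⌋:ℝ)/(b:ℝ)^n) (((⌊x * (b:ℝ)^n⌋:ℝ)+1)/(b:ℝ)^n)
            ⊆ Set.Ioo (p:ℝ) (q:ℝ) := by
          intro y hy
          have hyl := hy.1
          have hyr := hy.2
          have hfl : (⌊x * (b:ℝ)^n⌋:ℝ) ≤ x * (b:ℝ)^n := Int.floor_le _
          have hfu : x * (b:ℝ)^n < (⌊x * (b:ℝ)^n⌋:ℝ) + 1 := Int.lt_floor_add_one _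
          rw [div_le_iff₀ hbn] at hyl
          rw [lt_div_iff₀ hbn] at hyr
          have h1n' : (1:ℝ) < ε * (b:ℝ)^n := by
            have := (div_lt_iff₀ hbn).mp h1n
            linarith
          have hε1 : ε ≤ x - p := min_le_left _ _
          have hε2 : ε ≤ q - x := min_le_right _ _
          constructor
          · rw [← mul_lt_mul_iff_left₀ hbn]
            nlinarith [mul_le_mul_of_nonneg_right hε1 hbn.le]
          · rw [← mul_lt_mul_iff_left₀ hbn]
            nlinarith [mul_le_mul_of_nonneg_right hε2 hbn.le]
        rw [if_pos hsub]
        refine Set.mem_Ico.mpr ⟨?_, ?_⟩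
        · rw [div_le_iff₀ hbn]; exact Int.floor_le _
        · rw [lt_div_iff₀ hbn]; exact Int.lt_floor_add_one _
      · rintro ⟨nt, hx⟩
        by_cases hsub : Set.Ico ((nt.2:ℝ)/(b:ℝ)^nt.1) (((nt.2:ℝ)+1)/(b:ℝ)^nt.1) ⊆ Set.Ioo (p:ℝ) (q:ℝ)
        · rw [if_pos hsub] at hx; exact hsub hx
        · rw [if_neg hsub] at hx; exact absurd hx (Set.notMem_empty x)
    rw [hIoo]
    refine @MeasurableSet.iUnion _ _ (MeasurableSpace.generateFrom (badicIntervals b)) _ _ ?_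
    intro nt
    split_ifs
    · exact MeasurableSpace.measurableSet_generateFrom ⟨nt.1, nt.2, rfl⟩
    · exact @MeasurableSet.empty _ (MeasurableSpace.generateFrom (badicIntervals b))
  · apply MeasurableSpace.generateFrom_le
    rintro s ⟨n, t, rfl⟩
    exact measurableSet_Ico

end Pi

section Merge
variable {b k : ℕ} (hb : 2 ≤ b)
include hb

lemma eq_of_canonDigit_eq {x y : ℝ} (hx : x ∈ Set.Ico (0:ℝ) 1) (hy : y ∈ Set.Ico (0:ℝ) 1)
    (h : canonDigit b x = canonDigit b y) : x = y := by
  by_contra hne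
  have hbR : (1:ℝ) < (b:ℝ) := by exact_mod_cast by omega
  have hfl : ∀ n : ℕ, ⌊x * (b:ℝ)^n⌋ = ⌊y * (b:ℝ)^n⌋ := by
    intro n
    rw [floor_eq_digVal hb hx n, floor_eq_digVal hb hy n, h]
  have hlt : ∀ n : ℕ, |x - y| * (b:ℝ)^n < 1 := by
    intro n
    have hbn := bpow_pos hb n
    have h1 : (⌊x * (b:ℝ)^n⌋ : ℝ) ≤ x * (b:ℝ)^n := Int.floor_le _
    have h2 : x * (b:ℝ)^n < (⌊x * (b:ℝ)^n⌋ : ℝ) + 1 := Int.lt_floor_add_one _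
    have h3 : (⌊y * (b:ℝ)^n⌋ : ℝ) ≤ y * (b:ℝ)^n := Int.floor_le _
    have h4 : y * (b:ℝ)^n < (⌊y * (b:ℝ)^n⌋ : ℝ) + 1 := Int.lt_floor_add_one _
    rw [hfl n] at h1 h2
    have habs : |x - y| * (b:ℝ)^n = |x * (b:ℝ)^n - y * (b:ℝ)^n| := by
      rw [← sub_mul, abs_mul, abs_of_pos hbn]
    rw [habs]
    rw [abs_sub_lt_iff]
    constructor <;> linarith
  have hpos : 0 < |x - y| := abs_pos.mpr (sub_ne_zero.mpr hne)
  obtain ⟨n, hn⟩ := pow_unbounded_of_one_lt ((1:ℝ)/|x - y|) hbR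
  have := hlt n
  rw [div_lt_iff₀ hpos] at hn
  nlinarith

variable (hk : 1 ≤ k) (ψ : ℕ × Fin k ≃ ℕ)
include hk

lemma merged_lt (x : Fin k → ℝ) (n : ℕ) : mergedDigits b k ψ x n < b :=
  canonDigit_lt hb _ _

lemma merged_not_eventually {x : Fin k → ℝ}
    (hx : x ∈ Set.univ.pi (fun _ : Fin k => Set.Ico (0 : ℝ) 1)) (N : ℕ) :
    ∃ n, N ≤ n ∧ mergedDigits b k ψ x n ≠ b - 1 := by
  have hj : (0:ℕ) < k := hk
  set j0 : Fin k := ⟨0, hj⟩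
  have hxj : x j0 ∈ Set.Ico (0:ℝ) 1 := hx j0 trivial
  set F : Finset ℕ := (Finset.range N).image (fun i => (ψ.symm i).1) with hF
  obtain ⟨m, hm, hne⟩ := (goodSeq_canonDigit hb hxj).2 (F.sup id + 1)
  refine ⟨ψ (m, j0), ?_, ?_⟩
  · by_contra hlt
    push_neg at hlt
    have : m ∈ F := by
      rw [hF]
      apply Finset.mem_image.mpr
      exact ⟨ψ (m, j0), Finset.mem_range.mpr hlt, by rw [Equiv.symm_apply_apply]⟩
    have hle := Finset.le_sup (f := id) this
    simp only [id] at hle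
    omega
  · show canonDigit b (x (ψ.symm (ψ (m, j0))).2) (ψ.symm (ψ (m, j0))).1 ≠ b - 1
    rw [Equiv.symm_apply_apply]
    exact hne

lemma goodSeq_merged {x : Fin k → ℝ}
    (hx : x ∈ Set.univ.pi (fun _ : Fin k => Set.Ico (0 : ℝ) 1)) :
    GoodSeq b (mergedDigits b k ψ x) :=
  ⟨merged_lt hb hk ψ x, fun N => merged_not_eventually hb hk ψ hx N⟩

lemma mergeMap_mem {x : Fin k → ℝ}
    (hx : x ∈ Set.univ.pi (fun _ : Fin k => Set.Ico (0 : ℝ) 1)) :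
    mergeMap b k ψ x ∈ Set.Ico (0:ℝ) 1 :=
  baseVal_mem_Ico hb (goodSeq_merged hb hk ψ hx)

lemma canonDigit_mergeMap {x : Fin k → ℝ}
    (hx : x ∈ Set.univ.pi (fun _ : Fin k => Set.Ico (0 : ℝ) 1)) :
    canonDigit b (mergeMap b k ψ x) = mergedDigits b k ψ x :=
  canonDigit_baseVal hb (goodSeq_merged hb hk ψ hx)

lemma mergeMap_injOn :
    Set.InjOn (mergeMap b k ψ) (Set.univ.pi (fun _ : Fin k => Set.Ico (0 : ℝ) 1)) := by
  intro x hx y hy hxy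
  have hmd : mergedDigits b k ψ x = mergedDigits b k ψ y := by
    rw [← canonDigit_mergeMap hb hk ψ hx, ← canonDigit_mergeMap hb hk ψ hy, hxy]
  funext j
  apply eq_of_canonDigit_eq hb (hx j trivial) (hy j trivial)
  funext m
  have h1 : canonDigit b (x j) m = mergedDigits b k ψ x (ψ (m, j)) := by
    show _ = canonDigit b (x (ψ.symm (ψ (m, j))).2) (ψ.symm (ψ (m, j))).1
    rw [Equiv.symm_apply_apply]
  have h2 : canonDigit b (y j) m = mergedDigits b k ψ y (ψ (m, j)) := by
    show _ = canonDigit b (y (ψ.symm (ψ (m, j))).2) (ψ.symm (ψ (m, j))).1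
    rw [Equiv.symm_apply_apply]
  rw [h1, h2, hmd]

lemma measurable_mergeMap : Measurable (mergeMap b k ψ) := by
  apply measurable_of_tendsto_metrizable'
    (f := fun (i : ℕ) (x : Fin k → ℝ) =>
      ∑ n ∈ Finset.range i, (mergedDigits b k ψ x n : ℝ) / (b:ℝ)^(n+1)) Filter.atTop
  · intro i
    apply Finset.measurable_sum
    intro n _
    have hmeas : Measurable (fun x : Fin k → ℝ => mergedDigits b k ψ x n) :=
      (measurable_canonDigit (b := b) (ψ.symm n).1).comp (measurable_pi_apply (ψ.symm n).2)
    exact (Measurable.of_discrete (f := fun v : ℕ => (v:ℝ)/(b:ℝ)^(n+1))).comp hmeas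
  · rw [tendsto_pi_nhds]
    intro x
    exact (summable_digits hb (merged_lt hb hk ψ x)).hasSum.tendsto_sum_nat

end Merge

/-- Let `b ≥ 2` and `k ≥ 1` be integers and `ψ : ℕ × {0,…,k−1} → ℕ` a
bijection. Then for every `(x_0,…,x_{k−1}) ∈ [0,1)^k` the interleaved digit sequence `c` is
never eventually `b − 1` (so `M_ψ` is well defined with values in `[0,1)` and is injective),
and `M_ψ` pushes the product of `k` copies of `λ` restricted to `[0,1)` forward to `λ`
restricted to `[0,1)`. -/
theorem mergeMap_measurePreserving (b k : ℕ) (hb : 2 ≤ b) (hk : 1 ≤ k)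
    (ψ : ℕ × Fin k ≃ ℕ) :
    (∀ x ∈ Set.univ.pi (fun _ : Fin k => Set.Ico (0 : ℝ) 1),
      ∀ N : ℕ, ∃ n, N ≤ n ∧ mergedDigits b k ψ x n ≠ b - 1) ∧
    Set.MapsTo (mergeMap b k ψ)
      (Set.univ.pi (fun _ : Fin k => Set.Ico (0 : ℝ) 1)) (Set.Ico (0 : ℝ) 1) ∧
    Set.InjOn (mergeMap b k ψ) (Set.univ.pi (fun _ : Fin k => Set.Ico (0 : ℝ) 1)) ∧
    Measure.map (mergeMap b k ψ)
        (Measure.pi fun _ : Fin k => volume.restrict (Set.Ico (0 : ℝ) 1))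
      = volume.restrict (Set.Ico (0 : ℝ) 1) := by
  classical
  refine ⟨fun x hx N => merged_not_eventually hb hk ψ hx N,
    fun x hx => mergeMap_mem hb hk ψ hx,
    mergeMap_injOn hb hk ψ, ?_⟩
  set M := mergeMap b k ψ with hM
  set μ : Measure (Fin k → ℝ) :=
    Measure.pi (fun _ : Fin k => volume.restrict (Set.Ico (0:ℝ) 1)) with hμ
  have hMm : Measurable M := measurable_mergeMap hb hk ψ
  have hrest1 : (volume.restrict (Set.Ico (0:ℝ) 1)) Set.univ = 1 := by
    rw [Measure.restrict_apply MeasurableSet.univ, Set.univ_inter, Real.volume_Ico]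
    norm_num
  have hμprob : IsProbabilityMeasure μ := by
    constructor
    rw [hμ, Measure.pi_univ]
    simp [hrest1]
  haveI := hμprob
  haveI : IsProbabilityMeasure (Measure.map M μ) :=
    Measure.isProbabilityMeasure_map hMm.aemeasurable
  set box := Set.univ.pi (fun _ : Fin k => Set.Ico (0:ℝ) 1) with hboxdef
  have hboxm : MeasurableSet box := MeasurableSet.univ_pi (fun _ => measurableSet_Ico)
  have hboxfull : μ box = 1 := by
    rw [hμ, hboxdef, Measure.pi_pi]
    simp [Measure.restrict_apply measurableSet_Ico, Real.volume_Ico]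
  have hboxc : μ boxᶜ = 0 := by
    rw [measure_compl hboxm (measure_ne_top μ box), hboxfull, measure_univ]
    simp
  have hdrop : ∀ s : Set ℝ, μ (M ⁻¹' s) = μ (M ⁻¹' s ∩ box) := by
    intro s
    apply le_antisymm
    · calc μ (M ⁻¹' s) ≤ μ ((M ⁻¹' s ∩ box) ∪ boxᶜ) := by
            apply measure_mono
            intro z hz
            by_cases h : z ∈ box
            · exact Or.inl ⟨hz, h⟩
            · exact Or.inr h
      _ ≤ μ (M ⁻¹' s ∩ box) + μ boxᶜ := measure_union_le _ _
      _ = μ (M ⁻¹' s ∩ box) := by rw [hboxc, add_zero]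
    · exact measure_mono Set.inter_subset_left
  apply ext_of_generate_finite (badicIntervals b) (borel_eq_badic hb) (isPiSystem_badic hb)
  · rintro s ⟨n, t, rfl⟩
    have hbn := bpow_pos hb n
    rw [Measure.map_apply hMm measurableSet_Ico, hdrop,
      Measure.restrict_apply measurableSet_Ico]
    by_cases ht0 : 0 ≤ t
    · by_cases ht1 : t < (b:ℤ)^n
      · -- main case
        have htR0 : (0:ℝ) ≤ (t:ℝ) := by exact_mod_cast ht0
        have htR1 : (t:ℝ) < (b:ℝ)^n := by
          have : ((b:ℤ)^n : ℝ) = (b:ℝ)^n := by push_cast; ring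
          rw [← this]; exact_mod_cast ht1
        have htR1' : (t:ℝ) + 1 ≤ (b:ℝ)^n := by
          have h2 : t + 1 ≤ (b:ℤ)^n := by omega
          have : ((t + 1 : ℤ) : ℝ) ≤ (((b:ℤ)^n : ℤ) : ℝ) := by exact_mod_cast h2
          push_cast at this
          linarith
        set y0 : ℝ := (t:ℝ)/(b:ℝ)^n with hy0def
        have hy0 : y0 ∈ Set.Ico (0:ℝ) 1 := by
          constructor
          · positivity
          · rw [hy0def, div_lt_one hbn]; exact htR1
        set dd : ℕ → ℕ := canonDigit b y0 with hdd
        have hddlt : ∀ m, dd m < b := fun m => canonDigit_lt hb _ _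
        have hfl0 : ⌊y0 * (b:ℝ)^n⌋ = t := by
          apply (mem_badic_iff hb n t y0).mp
          constructor
          · exact le_refl _
          · rw [hy0def]
            apply div_lt_div_of_pos_right (by linarith) hbn
        have hdigt : (digVal b dd n : ℤ) = t := by
          rw [← floor_eq_digVal hb hy0 n, hfl0]
        -- the coordinate constraint sets
        set P : Fin k → Finset ℕ := fun j =>
          ((Finset.range n).filter (fun i => (ψ.symm i).2 = j)).image
            (fun i => (ψ.symm i).1) with hP
        set A : Fin k → Set ℝ := fun j =>
          {z : ℝ | z ∈ Set.Ico (0:ℝ) 1 ∧ ∀ m ∈ P j, canonDigit b z m = dd (ψ (m, j))}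
          with hA
        have hpre : M ⁻¹' (Set.Ico ((t:ℝ)/(b:ℝ)^n) (((t:ℝ)+1)/(b:ℝ)^n)) ∩ box
            = Set.univ.pi A := by
          ext x
          constructor
          · rintro ⟨hMx, hxbox⟩
            have hmem := mergeMap_mem hb hk ψ hxbox
            have h1 : ⌊M x * (b:ℝ)^n⌋ = t := (mem_badic_iff hb n t _).mp hMx
            have h2 : ⌊M x * (b:ℝ)^n⌋ = (digVal b (mergedDigits b k ψ x) n : ℤ) := by
              rw [floor_eq_digVal hb hmem n, canonDigit_mergeMap hb hk ψ hxbox]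
            have h3 : digVal b (mergedDigits b k ψ x) n = digVal b dd n := by
              have : (digVal b (mergedDigits b k ψ x) n : ℤ) = (digVal b dd n : ℤ) := by
                rw [← h2, h1, hdigt]
              exact_mod_cast this
            have hmerge : ∀ i < n, mergedDigits b k ψ x i = dd i :=
              digVal_inj (fun m _ => merged_lt hb hk ψ x m) (fun m _ => hddlt m) h3
            intro j _
            refine ⟨hxbox j trivial, ?_⟩
            intro m hm
            obtain ⟨i, hifil, him⟩ := Finset.mem_image.mp hm
            have hif := Finset.mem_filter.mp hifil
            have hpair : ψ.symm i = (m, j) := Prod.ext him hif.2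
            have hpsi : ψ (m, j) = i := by rw [← hpair, Equiv.apply_symm_apply]
            have hmi : mergedDigits b k ψ x i = canonDigit b (x j) m := by
              show canonDigit b (x (ψ.symm i).2) (ψ.symm i).1 = _
              rw [hpair]
            rw [hpsi, ← hmi]
            exact hmerge i (Finset.mem_range.mp hif.1)
          · intro hx
            have hxbox : x ∈ box := fun j _ => (hx j trivial).1
            have hmerge : ∀ i < n, mergedDigits b k ψ x i = dd i := by
              intro i hi
              have hmP : (ψ.symm i).1 ∈ P ((ψ.symm i).2) := by
                apply Finset.mem_image.mpr
                exact ⟨i, Finset.mem_filter.mpr ⟨Finset.mem_range.mpr hi, rfl⟩, rfl⟩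
              have := (hx ((ψ.symm i).2) trivial).2 _ hmP
              have hpsi : ψ ((ψ.symm i).1, (ψ.symm i).2) = i := by
                rw [Prod.mk.eta, Equiv.apply_symm_apply]
              rw [hpsi] at this
              exact this
            refine ⟨?_, hxbox⟩
            apply (mem_badic_iff hb n t _).mpr
            have hmem := mergeMap_mem hb hk ψ hxbox
            rw [floor_eq_digVal hb hmem n, canonDigit_mergeMap hb hk ψ hxbox,
              digVal_congr hmerge, hdigt]
          -- done set identity
        rw [hpre, hμ, Measure.pi_pi]
        have hAj : ∀ j, (volume.restrict (Set.Ico (0:ℝ) 1)) (A j)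
            = ((b : ENNReal)⁻¹) ^ (P j).card := by
          intro j
          rw [Measure.restrict_apply (measurableSet_finset_cylinder (P j) _),
            Set.inter_eq_self_of_subset_left (fun z hz => hz.1)]
          exact volume_finset_cylinder hb (P j) _ (fun m _ => hddlt _)
        rw [Finset.prod_congr rfl (fun j _ => hAj j), Finset.prod_pow_eq_pow_sum]
        have hsum : ∑ j : Fin k, (P j).card = n := by
          have hcardim : ∀ j : Fin k, (P j).card
              = ((Finset.range n).filter (fun i => (ψ.symm i).2 = j)).card := by
            intro j
            apply Finset.card_image_of_injOn
            intro i1 h1 i2 h2 he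
            have e1 := (Finset.mem_filter.mp h1).2
            have e2 := (Finset.mem_filter.mp h2).2
            have : ψ.symm i1 = ψ.symm i2 := Prod.ext he (e1.trans e2.symm)
            exact ψ.symm.injective this
          rw [Finset.sum_congr rfl (fun j _ => hcardim j)]
          have := Finset.card_eq_sum_card_fiberwise
            (s := Finset.range n) (t := Finset.univ)
            (f := fun i => (ψ.symm i).2) (fun i _ => Finset.mem_univ _)
          rw [← this, Finset.card_range]
        rw [hsum]
        -- RHS
        have hIsub : Set.Ico ((t:ℝ)/(b:ℝ)^n) (((t:ℝ)+1)/(b:ℝ)^n) ∩ Set.Ico (0:ℝ) 1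
            = Set.Ico ((t:ℝ)/(b:ℝ)^n) (((t:ℝ)+1)/(b:ℝ)^n) := by
          apply Set.inter_eq_self_of_subset_left
          intro z hz
          constructor
          · have : (0:ℝ) ≤ (t:ℝ)/(b:ℝ)^n := by positivity
            linarith [hz.1]
          · have h2 : ((t:ℝ)+1)/(b:ℝ)^n ≤ 1 := by
              rw [div_le_one hbn]; exact htR1'
            linarith [hz.2]
        rw [hIsub, Real.volume_Ico]
        have harea : ((t:ℝ)+1)/(b:ℝ)^n - (t:ℝ)/(b:ℝ)^n = ((b:ℝ)^n)⁻¹ := by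
          field_simp
          ring
        rw [harea, ← ENNReal.ofReal_natCast b, ← ENNReal.ofReal_inv_of_pos (bpos hb),
          ← ENNReal.ofReal_pow (by positivity), inv_pow]
      · -- t ≥ b^n : interval above [0,1)
        push_neg at ht1
        have hge1 : (1:ℝ) ≤ (t:ℝ)/(b:ℝ)^n := by
          rw [le_div_iff₀ hbn, one_mul]
          have : ((b:ℤ)^n : ℝ) ≤ (t:ℝ) := by exact_mod_cast ht1
          push_cast at this
          linarith
        have hempty1 : M ⁻¹' (Set.Ico ((t:ℝ)/(b:ℝ)^n) (((t:ℝ)+1)/(b:ℝ)^n)) ∩ box = ∅ := by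
          ext x
          simp only [Set.mem_inter_iff, Set.mem_preimage, Set.mem_empty_iff_false, iff_false]
          rintro ⟨hMx, hxbox⟩
          have := (mergeMap_mem hb hk ψ hxbox).2
          have := hMx.1
          linarith
        have hempty2 : Set.Ico ((t:ℝ)/(b:ℝ)^n) (((t:ℝ)+1)/(b:ℝ)^n) ∩ Set.Ico (0:ℝ) 1 = ∅ := by
          ext z
          simp only [Set.mem_inter_iff, Set.mem_empty_iff_false, iff_false]
          rintro ⟨hz1, hz2⟩
          have := hz1.1
          have := hz2.2
          linarith
        rw [hempty1, hempty2, measure_empty, measure_empty]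
    · -- t < 0 : interval below 0
      push_neg at ht0
      have hle0 : ((t:ℝ)+1)/(b:ℝ)^n ≤ 0 := by
        apply div_nonpos_of_nonpos_of_nonneg _ hbn.le
        have : (t:ℝ) ≤ -1 := by exact_mod_cast (by omega : t ≤ -1)
        linarith
      have hempty1 : M ⁻¹' (Set.Ico ((t:ℝ)/(b:ℝ)^n) (((t:ℝ)+1)/(b:ℝ)^n)) ∩ box = ∅ := by
        ext x
        simp only [Set.mem_inter_iff, Set.mem_preimage, Set.mem_empty_iff_false, iff_false]
        rintro ⟨hMx, hxbox⟩
        have := (mergeMap_mem hb hk ψ hxbox).1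
        have := hMx.2
        linarith
      have hempty2 : Set.Ico ((t:ℝ)/(b:ℝ)^n) (((t:ℝ)+1)/(b:ℝ)^n) ∩ Set.Ico (0:ℝ) 1 = ∅ := by
        ext z
        simp only [Set.mem_inter_iff, Set.mem_empty_iff_false, iff_false]
        rintro ⟨hz1, hz2⟩
        have := hz1.2
        have := hz2.1
        linarith
      rw [hempty1, hempty2, measure_empty, measure_empty]
  · rw [Measure.map_apply hMm MeasurableSet.univ, Set.preimage_univ, measure_univ, hrest1]
end
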